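/- arXiv:1211.4230 — 6 statements merged into one kernel-verified Lean document; each statement's English description precedes it below -/
import Mathlib

section
/- Let f be a nonzero element of R. The localization map R → R_f induces a K-algebra homomorphism R^𝐝 → (R_f)^𝐝 sending g_i to (g/1)_i for all g ∈ R and all multi-indices i with |i| ≥ 1, and hence an R_f-algebra homomorphism ψ_f : (R^𝐝)_f → (R_f)^𝐝 from the localization of R^𝐝 at the image of f under the structure map R → R^𝐝. Then ψ_f is an isomorphism (i.e. bijective). -/
set_option maxHeartbeats 1000000
set_option synthInstance.maxHeartbeats 400000
set_option linter.unusedSectionVars false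


namespace Paper

/-- Multi-indices: finitely supported functions `Fin d → ℕ`. -/
abbrev MIdx (d : ℕ) := Fin d →₀ ℕ

/-- The length `|i|` of a multi-index. -/
def deg {d : ℕ} (i : MIdx d) : ℕ := i.sum fun _ n => n

variable (K R : Type) [Field K] [CharZero K] [CommRing R] [Algebra K R]

/-- The defining relations of the algebra `R^𝐝`. -/
def relSet (d : ℕ) : Set (MvPolynomial (R × MIdx d) R) :=
  {p | (∃ f g : R, ∃ i : MIdx d,
          p = MvPolynomial.X (f + g, i) - MvPolynomial.X (f, i) - MvPolynomial.X (g, i)) ∨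
       (∃ f g : R, ∃ i : MIdx d,
          p = MvPolynomial.X (f * g, i) -
            ∑ q ∈ Finset.HasAntidiagonal.antidiagonal i, MvPolynomial.X (f, q.1) * MvPolynomial.X (g, q.2)) ∨
       (∃ f : R, p = MvPolynomial.X (f, (0 : MIdx d)) - MvPolynomial.C f) ∨
       (∃ (c : K) (i : MIdx d), 1 ≤ deg i ∧ p = MvPolynomial.X (algebraMap K R c, i))}

/-- The commutative `R`-algebra `R^𝐝` generated by the symbols `f_i`. -/
def Rd (d : ℕ) : Type :=
  MvPolynomial (R × MIdx d) R ⧸ Ideal.span (relSet K R d)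

noncomputable instance (d : ℕ) : CommRing (Rd K R d) := Ideal.Quotient.commRing _
noncomputable instance (d : ℕ) : Algebra R (Rd K R d) := Ideal.Quotient.algebra R
noncomputable instance (d : ℕ) : Algebra K (Rd K R d) := Ideal.Quotient.algebra K

/-- The generator `f_i` of `R^𝐝`. -/
noncomputable def gen {d : ℕ} (f : R) (i : MIdx d) : Rd K R d :=
  Ideal.Quotient.mk (Ideal.span (relSet K R d)) (MvPolynomial.X (f, i))

/-- The Taylor series `I(f) = Σ_i f_i t^i ∈ R^𝐝[[t^1,…,t^d]]`. -/
noncomputable def Ifun {d : ℕ} (f : R) : MvPowerSeries (Fin d) (Rd K R d) :=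
  fun i => gen K R f i

end Paper

namespace Paper

variable (K R : Type) [Field K] [CharZero K] [CommRing R] [Algebra K R]
variable (d : ℕ)

variable (d : ℕ)

lemma mk_rel {p : MvPolynomial (R × MIdx d) R} (hp : p ∈ relSet K R d) :
    Ideal.Quotient.mk (Ideal.span (relSet K R d)) p = 0 :=
  Ideal.Quotient.eq_zero_iff_mem.2 (Ideal.subset_span hp)

lemma deg_pos_of_ne_zero {i : MIdx d} (hi : i ≠ 0) : 1 ≤ deg i := by
  by_contra h
  apply hi
  have h0 : deg i = 0 := by omega
  have h1 := Finset.sum_eq_zero_iff.1 h0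
  ext a
  rw [Finsupp.coe_zero, Pi.zero_apply]
  by_cases ha : a ∈ i.support
  · exact h1 a ha
  · exact Finsupp.notMem_support_iff.1 ha

lemma gen_add (f g : R) (i : MIdx d) :
    gen K R (f + g) i = gen K R f i + gen K R g i := by
  have := mk_rel K R d (p := MvPolynomial.X (f + g, i) - MvPolynomial.X (f, i) - MvPolynomial.X (g, i))
    (Or.inl ⟨f, g, i, rfl⟩)
  simp only [map_sub] at this
  unfold gen
  rw [sub_sub, sub_eq_zero] at this
  exact this

lemma gen_mul (f g : R) (i : MIdx d) :
    gen K R (f * g) i = ∑ q ∈ Finset.HasAntidiagonal.antidiagonal i, gen K R f q.1 * gen K R g q.2 := by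
  have := mk_rel K R d (p := MvPolynomial.X (f * g, i) -
      ∑ q ∈ Finset.HasAntidiagonal.antidiagonal i, MvPolynomial.X (f, q.1) * MvPolynomial.X (g, q.2))
    (Or.inr (Or.inl ⟨f, g, i, rfl⟩))
  simp only [map_sub, map_sum, map_mul] at this
  unfold gen
  rw [sub_eq_zero] at this
  exact this

lemma algebraMap_Rd (r : R) :
    algebraMap R (Rd K R d) r =
      Ideal.Quotient.mk (Ideal.span (relSet K R d)) (MvPolynomial.C r) := rfl

lemma gen_zero_idx (f : R) : gen K R f (0 : MIdx d) = algebraMap R (Rd K R d) f := by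
  have := mk_rel K R d (p := MvPolynomial.X (f, (0 : MIdx d)) - MvPolynomial.C f)
    (Or.inr (Or.inr (Or.inl ⟨f, rfl⟩)))
  simp only [map_sub] at this
  rw [algebraMap_Rd]
  unfold gen
  linear_combination this

lemma gen_algebraMap (c : K) {i : MIdx d} (hi : i ≠ 0) :
    gen K R (algebraMap K R c) i = 0 :=
  mk_rel K R d (Or.inr (Or.inr (Or.inr ⟨c, i, deg_pos_of_ne_zero d hi, rfl⟩)))

lemma gen_zero (i : MIdx d) : gen K R (0 : R) i = 0 := by
  have := gen_add K R d 0 0 i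
  simpa using this.symm


open MvPowerSeries in
/-- `I` as a ring hom `R →+* R^𝐝[[t]]`. -/
noncomputable def IHom : R →+* MvPowerSeries (Fin d) (Rd K R d) where
  toFun := Ifun K R
  map_one' := by
    ext i
    rw [coeff_one]
    show gen K R 1 i = _
    split_ifs with h
    · subst h; rw [gen_zero_idx, map_one]
    · rw [show (1 : R) = algebraMap K R 1 by rw [map_one]]
      exact gen_algebraMap K R d 1 h
  map_mul' := fun f g => by
    ext i
    rw [coeff_mul]
    exact gen_mul K R d f g i
  map_zero' := by
    ext i
    exact gen_zero K R d i
  map_add' := fun f g => by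
    ext i
    exact gen_add K R d f g i

lemma coeff_IHom (f : R) (i : MIdx d) :
    MvPowerSeries.coeff i (IHom K R d f) = gen K R f i := rfl

lemma constantCoeff_IHom (f : R) :
    MvPowerSeries.constantCoeff (IHom K R d f) =
      algebraMap R (Rd K R d) f := by
  rw [← MvPowerSeries.coeff_zero_eq_constantCoeff, coeff_IHom, gen_zero_idx]

section Lift

variable {A : Type} [CommRing A] (Φ : R →+* MvPowerSeries (Fin d) A)
  (hΦ : ∀ (c : K) (i : MIdx d), i ≠ 0 → MvPowerSeries.coeff i (Φ (algebraMap K R c)) = 0)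

/-- Universal property: a ring hom `R →+* A[[t]]` killing constants induces
`R^𝐝 →+* A`. -/
noncomputable def RdLift : Rd K R d →+* A :=
  Ideal.Quotient.lift _
    (MvPolynomial.eval₂Hom ((MvPowerSeries.constantCoeff).comp Φ)
      (fun p => MvPowerSeries.coeff p.2 (Φ p.1)))
    (by
      intro a ha
      rw [← RingHom.mem_ker]
      refine Ideal.span_le.2 ?_ ha
      rintro p (⟨f, g, i, rfl⟩ | ⟨f, g, i, rfl⟩ | ⟨f, rfl⟩ | ⟨c, i, hi, rfl⟩)
      · simp only [SetLike.mem_coe, RingHom.mem_ker, map_sub, MvPolynomial.eval₂Hom_X']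
        rw [map_add, map_add]; ring
      · simp only [SetLike.mem_coe, RingHom.mem_ker, map_sub, map_sum,
          MvPolynomial.eval₂Hom_X']
        rw [map_mul, MvPowerSeries.coeff_mul]
        refine sub_eq_zero.2 (Finset.sum_congr rfl fun q _ => ?_)
        rw [map_mul, MvPolynomial.eval₂Hom_X', MvPolynomial.eval₂Hom_X']
      · simp only [SetLike.mem_coe, RingHom.mem_ker, map_sub, MvPolynomial.eval₂Hom_X',
          MvPolynomial.eval₂Hom_C, RingHom.coe_comp, Function.comp_apply]
        rw [← MvPowerSeries.coeff_zero_eq_constantCoeff]; ring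
      · simp only [SetLike.mem_coe, RingHom.mem_ker, MvPolynomial.eval₂Hom_X']
        exact hΦ c i (fun h => by simp [h, deg] at hi))

lemma RdLift_gen (g : R) (i : MIdx d) :
    RdLift K R d Φ hΦ (gen K R g i) = MvPowerSeries.coeff i (Φ g) := by
  unfold RdLift gen
  erw [Ideal.Quotient.lift_mk]
  simp

lemma RdLift_algebraMap (r : R) :
    RdLift K R d Φ hΦ (algebraMap R (Rd K R d) r) =
      MvPowerSeries.constantCoeff (Φ r) := by
  rw [algebraMap_Rd]
  unfold RdLift
  erw [Ideal.Quotient.lift_mk]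
  simp

end Lift

lemma closure_range_gen :
    Subring.closure (Set.range fun p : R × MIdx d => gen K R p.1 p.2) = ⊤ := by
  rw [eq_top_iff]
  rintro x -
  obtain ⟨p, rfl⟩ := Ideal.Quotient.mk_surjective x
  induction p using MvPolynomial.induction_on with
  | C a =>
      have : (Ideal.Quotient.mk (Ideal.span (relSet K R d))) (MvPolynomial.C a)
          = gen K R a 0 := by rw [← algebraMap_Rd, gen_zero_idx]
      rw [this]
      exact Subring.subset_closure ⟨(a, 0), rfl⟩
  | add p q hp hq => rw [map_add]; exact add_mem hp hq
  | mul_X p s hp =>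
      rw [map_mul]
      exact mul_mem hp (Subring.subset_closure ⟨s, rfl⟩)

lemma hom_ext {A : Type} [CommRing A] {F G : Rd K R d →+* A}
    (h : ∀ (g : R) (i : MIdx d), F (gen K R g i) = G (gen K R g i)) : F = G := by
  ext x
  have hx : x ∈ Subring.closure (Set.range fun p : R × MIdx d => gen K R p.1 p.2) := by
    rw [closure_range_gen]; trivial
  induction hx using Subring.closure_induction with
  | mem x hx => obtain ⟨p, rfl⟩ := hx; exact h p.1 p.2
  | one => simp
  | add x y _ _ hx hy => simp [hx, hy]
  | mul x y _ _ hx hy => simp [hx, hy]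
  | neg x _ hx => simp [hx]
  | zero => simp


section Main

variable (f : R)

/-- The localization of `R^𝐝` at (the image of) `f`. -/
abbrev Loc : Type := Localization.Away (algebraMap R (Rd K R d) f)

/-- The hom `R^𝐝 → (R_f)^𝐝` induced by `R → R_f`. -/
noncomputable def Dhom : Rd K R d →+* Rd K (Localization.Away f) d :=
  RdLift K R d ((IHom K (Localization.Away f) d).comp (algebraMap R (Localization.Away f)))
    (fun c i hi => by
      rw [RingHom.comp_apply, ← IsScalarTower.algebraMap_apply, coeff_IHom]
      exact gen_algebraMap K _ d c hi)

lemma Dhom_gen (g : R) (i : MIdx d) :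
    Dhom K R d f (gen K R g i) =
      gen K (Localization.Away f) (algebraMap R (Localization.Away f) g) i := by
  rw [Dhom, RdLift_gen, RingHom.comp_apply, coeff_IHom]

lemma Dhom_algebraMap (g : R) :
    Dhom K R d f (algebraMap R (Rd K R d) g) =
      algebraMap (Localization.Away f) (Rd K (Localization.Away f) d)
        (algebraMap R (Localization.Away f) g) := by
  rw [Dhom, RdLift_algebraMap, RingHom.comp_apply, constantCoeff_IHom]

lemma Dhom_unit : IsUnit (Dhom K R d f (algebraMap R (Rd K R d) f)) := by
  rw [Dhom_algebraMap]
  exact (IsLocalization.Away.algebraMap_isUnit (S := Localization.Away f) f).map _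

/-- The canonical `ψ_f : (R^𝐝)_f → (R_f)^𝐝`. -/
noncomputable def psi0 : Loc K R d f →+* Rd K (Localization.Away f) d :=
  IsLocalization.Away.lift (algebraMap R (Rd K R d) f) (Dhom_unit K R d f)

lemma psi0_spec (x : Rd K R d) :
    psi0 K R d f (algebraMap (Rd K R d) (Loc K R d f) x) = Dhom K R d f x :=
  IsLocalization.Away.lift_eq _ _ _

/-- `R → (R^𝐝)_f [[t]]`. -/
noncomputable def Theta0 : R →+* MvPowerSeries (Fin d) (Loc K R d f) :=
  (MvPowerSeries.map (algebraMap (Rd K R d) (Loc K R d f))).comp (IHom K R d)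

lemma Theta0_unit : IsUnit (Theta0 K R d f f) := by
  rw [MvPowerSeries.isUnit_iff_constantCoeff]
  show IsUnit (MvPowerSeries.constantCoeff
    (MvPowerSeries.map (algebraMap (Rd K R d) (Loc K R d f)) (IHom K R d f)))
  rw [MvPowerSeries.constantCoeff_map, constantCoeff_IHom]
  exact IsLocalization.Away.algebraMap_isUnit _

/-- `R_f → (R^𝐝)_f [[t]]`. -/
noncomputable def Theta : Localization.Away f →+* MvPowerSeries (Fin d) (Loc K R d f) :=
  IsLocalization.Away.lift f (Theta0_unit K R d f)

lemma Theta_spec (g : R) :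
    Theta K R d f (algebraMap R (Localization.Away f) g) = Theta0 K R d f g :=
  IsLocalization.Away.lift_eq _ _ _

lemma Theta_hyp : ∀ (c : K) (i : MIdx d), i ≠ 0 →
    MvPowerSeries.coeff i
      (Theta K R d f (algebraMap K (Localization.Away f) c)) = 0 := by
  intro c i hi
  rw [IsScalarTower.algebraMap_apply K R (Localization.Away f), Theta_spec, Theta0,
    RingHom.comp_apply, MvPowerSeries.coeff_map, coeff_IHom,
    gen_algebraMap K R d c hi, map_zero]

/-- The inverse `χ : (R_f)^𝐝 → (R^𝐝)_f`. -/
noncomputable def chi : Rd K (Localization.Away f) d →+* Loc K R d f :=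
  RdLift K (Localization.Away f) d (Theta K R d f) (Theta_hyp K R d f)

lemma chi_gen (x : Localization.Away f) (i : MIdx d) :
    chi K R d f (gen K (Localization.Away f) x i) =
      MvPowerSeries.coeff i (Theta K R d f x) :=
  RdLift_gen _ _ _ _ _ _ _

lemma map_psi0_Theta (x : Localization.Away f) :
    MvPowerSeries.map (psi0 K R d f) (Theta K R d f x) =
      IHom K (Localization.Away f) d x := by
  have : (MvPowerSeries.map (psi0 K R d f)).comp (Theta K R d f) =
      IHom K (Localization.Away f) d := by
    apply IsLocalization.ringHom_ext (Submonoid.powers f)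
    ext g i
    rw [RingHom.comp_apply, RingHom.comp_apply, RingHom.comp_apply, Theta_spec,
      MvPowerSeries.coeff_map, Theta0, RingHom.comp_apply, MvPowerSeries.coeff_map,
      coeff_IHom, psi0_spec, Dhom_gen, coeff_IHom]
  exact congrFun (congrArg (fun F => F.toFun) this) x

lemma psi0_chi : (psi0 K R d f).comp (chi K R d f) = RingHom.id _ := by
  apply hom_ext
  intro x i
  rw [RingHom.comp_apply, chi_gen, RingHom.id_apply, ← MvPowerSeries.coeff_map,
    map_psi0_Theta, coeff_IHom]

lemma chi_psi0 : (chi K R d f).comp (psi0 K R d f) = RingHom.id _ := by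
  apply IsLocalization.ringHom_ext (Submonoid.powers (algebraMap R (Rd K R d) f))
  apply hom_ext
  intro g i
  rw [RingHom.comp_apply, RingHom.comp_apply, RingHom.comp_apply, RingHom.id_apply,
    psi0_spec, Dhom_gen, chi_gen, Theta_spec, Theta0, RingHom.comp_apply,
    MvPowerSeries.coeff_map, coeff_IHom]

end Main

end Paper


/-- For `f ≠ 0` in `R`, the `K`-algebra homomorphism
`R^𝐝 → (R_f)^𝐝` induced by the localization map `R → R_f` induces a homomorphism
`ψ_f : (R^𝐝)_f → (R_f)^𝐝` on the localization of `R^𝐝` at the image of `f`, and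
any such `ψ_f` is an isomorphism (bijective). -/
theorem statement0 (K R : Type) [Field K] [CharZero K] [CommRing R] [Algebra K R]
    (d : ℕ) (hd : 1 ≤ d) (f : R) (hf : f ≠ 0) :
    (∃ ψ : Localization.Away (algebraMap R (Paper.Rd K R d) f) →+*
        Paper.Rd K (Localization.Away f) d,
      ∀ (g : R) (i : Paper.MIdx d),
        ψ (algebraMap (Paper.Rd K R d)
            (Localization.Away (algebraMap R (Paper.Rd K R d) f)) (Paper.gen K R g i)) =
          Paper.gen K (Localization.Away f) (algebraMap R (Localization.Away f) g) i) ∧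
    (∀ ψ : Localization.Away (algebraMap R (Paper.Rd K R d) f) →+*
        Paper.Rd K (Localization.Away f) d,
      (∀ (g : R) (i : Paper.MIdx d),
        ψ (algebraMap (Paper.Rd K R d)
            (Localization.Away (algebraMap R (Paper.Rd K R d) f)) (Paper.gen K R g i)) =
          Paper.gen K (Localization.Away f) (algebraMap R (Localization.Away f) g) i) →
      Function.Bijective ψ) := by
  constructor
  · exact ⟨Paper.psi0 K R d f, fun g i => by
      rw [Paper.psi0_spec, Paper.Dhom_gen]⟩
  · intro ψ hψ
    have hψ0 : ψ = Paper.psi0 K R d f := by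
      apply IsLocalization.ringHom_ext (Submonoid.powers (algebraMap R (Paper.Rd K R d) f))
      apply Paper.hom_ext
      intro g i
      rw [RingHom.comp_apply, RingHom.comp_apply, hψ g i, Paper.psi0_spec, Paper.Dhom_gen]
    rw [hψ0]
    refine Function.bijective_iff_has_inverse.2 ⟨Paper.chi K R d f, ?_, ?_⟩
    · intro x
      exact congrFun (congrArg (fun F => F.toFun) (Paper.chi_psi0 K R d f)) x
    · intro x
      exact congrFun (congrArg (fun F => F.toFun) (Paper.psi0_chi K R d f)) x
end

section
/- Assume that Ω^1_{R/K} is a free R-module with basis dx^1,…,dx^d for elements x^1,…,x^d ∈ R. Then the R-algebra homomorphism from the polynomial R-algebra on variables X^a_i, indexed by pairs (a, i) with 1 ≤ a ≤ d and i a multi-index of length |i| ≥ 1, to R^𝐝, sending the variable X^a_i to the generator (x^a)_i, is an isomorphism (bijective). -/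
namespace S1

open Paper Finset

set_option maxHeartbeats 1000000
set_option synthInstance.maxHeartbeats 400000

/-! ### Generalities on `deg` -/

theorem deg_add {d : ℕ} (i j : MIdx d) : deg (i + j) = deg i + deg j :=
  Finsupp.sum_add_index' (fun _ => rfl) (fun _ _ _ => rfl)

theorem deg_eq_zero {d : ℕ} {i : MIdx d} (h : deg i = 0) : i = 0 := by
  ext a
  by_cases ha : a ∈ i.support
  · exact (Finset.sum_eq_zero_iff.mp h) a ha
  · simpa using Finsupp.notMem_support_iff.mp ha

/-! ### Coefficientwise extension of derivations -/

section CoeffDeriv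

variable {K A : Type*} [CommRing K] [CommRing A] [Algebra K A] {σ : Type*}

/-- Coefficientwise application of a derivation, on polynomials, as linear map. -/
noncomputable def pmap (δ : Derivation K A A) :
    MvPolynomial σ A →ₗ[K] MvPolynomial σ A :=
  (AddMonoidAlgebra.coeffLinearEquiv K).symm.toLinearMap ∘ₗ
    Finsupp.mapRange.linearMap (δ.toLinearMap) ∘ₗ (AddMonoidAlgebra.coeffLinearEquiv K).toLinearMap

theorem pmap_coeff (δ : Derivation K A A) (p : MvPolynomial σ A) (m : σ →₀ ℕ) :
    MvPolynomial.coeff m (pmap δ p) = δ (MvPolynomial.coeff m p) := rfl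

/-- Extend a derivation of `A` to `MvPolynomial σ A`, coefficientwise. -/
noncomputable def pderiv' (δ : Derivation K A A) :
    Derivation K (MvPolynomial σ A) (MvPolynomial σ A) :=
  Derivation.mk' (pmap δ) (by
    intro p q
    apply MvPolynomial.ext
    intro m
    classical
    rw [MvPolynomial.coeff_add, smul_eq_mul, smul_eq_mul, pmap_coeff,
      MvPolynomial.coeff_mul, MvPolynomial.coeff_mul, MvPolynomial.coeff_mul, map_sum]
    rw [Finsupp.sum_antidiagonal_swap m
        (fun a b => MvPolynomial.coeff a q * MvPolynomial.coeff b (pmap δ p))]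
    rw [← Finset.sum_add_distrib]
    refine Finset.sum_congr rfl fun z _ => ?_
    rw [Derivation.leibniz, smul_eq_mul, smul_eq_mul, pmap_coeff, pmap_coeff]
    try ring)

theorem pderiv'_coeff (δ : Derivation K A A) (p : MvPolynomial σ A) (m : σ →₀ ℕ) :
    MvPolynomial.coeff m (pderiv' δ p) = δ (MvPolynomial.coeff m p) := rfl

theorem pderiv'_X (δ : Derivation K A A) (v : σ) :
    pderiv' δ (MvPolynomial.X v) = 0 := by
  apply MvPolynomial.ext
  intro m
  rw [pderiv'_coeff]
  classical
  rw [MvPolynomial.coeff_X']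
  split_ifs
  · simpa using δ.map_one_eq_zero
  · simp

theorem pderiv'_C (δ : Derivation K A A) (r : A) :
    (pderiv' δ (MvPolynomial.C r) : MvPolynomial σ A) = MvPolynomial.C (δ r) := by
  apply MvPolynomial.ext
  intro m
  rw [pderiv'_coeff]
  classical
  simp only [MvPolynomial.coeff_C]
  split_ifs
  · rfl
  · simp

/-- Coefficientwise application of a derivation, on power series, as linear map. -/
noncomputable def psmap (δ : Derivation K A A) :
    MvPowerSeries σ A →ₗ[K] MvPowerSeries σ A where
  toFun u := fun i => δ (u i)
  map_add' u v := funext fun i => by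
    show δ ((u + v) i) = δ (u i) + δ (v i)
    rw [show (u + v) i = u i + v i from rfl, map_add]
  map_smul' c u := funext fun i => by
    show δ ((c • u) i) = (c • fun j => δ (u j)) i
    rw [show (c • u) i = c • (u i) from rfl, Derivation.map_smul]
    rfl

theorem psmap_coeff [DecidableEq σ] (δ : Derivation K A A) (u : MvPowerSeries σ A) (i : σ →₀ ℕ) :
    MvPowerSeries.coeff i (psmap δ u) = δ (MvPowerSeries.coeff i u) := rfl

/-- Extend a derivation of `A` to `MvPowerSeries σ A`, coefficientwise. -/
noncomputable def psderiv [DecidableEq σ] (δ : Derivation K A A) :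
    Derivation K (MvPowerSeries σ A) (MvPowerSeries σ A) :=
  Derivation.mk' (psmap δ) (by
    intro u v
    apply MvPowerSeries.ext
    intro i
    rw [map_add, smul_eq_mul, smul_eq_mul, psmap_coeff,
      MvPowerSeries.coeff_mul, MvPowerSeries.coeff_mul, MvPowerSeries.coeff_mul, map_sum]
    rw [Finsupp.sum_antidiagonal_swap i
        (fun a b => MvPowerSeries.coeff a v * MvPowerSeries.coeff b (psmap δ u))]
    rw [← Finset.sum_add_distrib]
    refine Finset.sum_congr rfl fun z _ => ?_
    rw [Derivation.leibniz, smul_eq_mul, smul_eq_mul, psmap_coeff, psmap_coeff]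
    try ring)

theorem psderiv_coeff [DecidableEq σ] (δ : Derivation K A A) (u : MvPowerSeries σ A)
    (i : σ →₀ ℕ) : MvPowerSeries.coeff i (psderiv δ u) = δ (MvPowerSeries.coeff i u) := rfl

end CoeffDeriv

end S1

namespace S1
open Paper Finset

set_option maxHeartbeats 1000000
set_option synthInstance.maxHeartbeats 400000

section IterLeibniz

variable {K A : Type*} [CommRing K] [CommRing A] [Algebra K A]

theorem iter_leibniz (D : Derivation K A A) (u v : A) (n : ℕ) :
    (⇑D)^[n] (u * v) =
      ∑ p ∈ Finset.HasAntidiagonal.antidiagonal n,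
        (n.choose p.1) • ((⇑D)^[p.1] u * (⇑D)^[p.2] v) := by
  induction n with
  | zero => simp
  | succ n ih =>
    have expand : ∀ p : ℕ × ℕ,
        D ((n.choose p.1) • ((⇑D)^[p.1] u * (⇑D)^[p.2] v)) =
          (n.choose p.1) • ((⇑D)^[p.1+1] u * (⇑D)^[p.2] v) +
          (n.choose p.1) • ((⇑D)^[p.1] u * (⇑D)^[p.2+1] v) := by
      intro p
      rw [map_nsmul, Derivation.leibniz, smul_eq_mul, smul_eq_mul,
        ← Function.iterate_succ_apply' (⇑D) p.1 u, ← Function.iterate_succ_apply' (⇑D) p.2 v,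
        smul_add, mul_comm ((⇑D)^[p.2] v), add_comm]
    rw [Function.iterate_succ_apply', ih, map_sum]
    rw [Finset.sum_congr rfl fun p _ => expand p, Finset.sum_add_distrib]
    -- name the two sums
    have hB : (∑ p ∈ Finset.HasAntidiagonal.antidiagonal n,
          (n.choose p.1) • ((⇑D)^[p.1] u * (⇑D)^[p.2+1] v))
        = ((⇑D)^[0] u * (⇑D)^[n+1] v)
          + ∑ p ∈ Finset.HasAntidiagonal.antidiagonal n,
              (n.choose (p.1+1)) • ((⇑D)^[p.1+1] u * (⇑D)^[p.2] v) := by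
      have h1 := Finset.Nat.sum_antidiagonal_succ
        (n := n) (f := fun q => (n.choose q.1) • ((⇑D)^[q.1] u * (⇑D)^[q.2] v))
      have h2 := Finset.Nat.sum_antidiagonal_succ'
        (n := n) (f := fun q => (n.choose q.1) • ((⇑D)^[q.1] u * (⇑D)^[q.2] v))
      simp only [Nat.choose_zero_right, one_smul, Nat.choose_succ_self, zero_smul,
        zero_add] at h1 h2
      rw [← h2, h1]
    rw [hB, Finset.Nat.sum_antidiagonal_succ
      (f := fun q => ((n+1).choose q.1) • ((⇑D)^[q.1] u * (⇑D)^[q.2] v))]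
    simp only [Nat.choose_zero_right, one_smul, Nat.choose_succ_succ, add_smul,
      Finset.sum_add_distrib]
    abel

end IterLeibniz

section Del

variable {K R : Type} [Field K] [CharZero K] [CommRing R] [Algebra K R]
variable {d : ℕ}

/-- The dual-basis derivations `∂ₐ`. -/
noncomputable def del (b : Module.Basis (Fin d) R (KaehlerDifferential K R)) (a : Fin d) :
    Derivation K R R :=
  ((Finsupp.lapply a).comp b.repr.toLinearMap).compDer (KaehlerDifferential.D K R)

theorem del_apply (b : Module.Basis (Fin d) R (KaehlerDifferential K R)) (a : Fin d) (f : R) :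
    del b a f = b.repr (KaehlerDifferential.D K R f) a := rfl

theorem del_x (x : Fin d → R) (b : Module.Basis (Fin d) R (KaehlerDifferential K R))
    (hb : ∀ a : Fin d, b a = KaehlerDifferential.D K R (x a)) (a c : Fin d) :
    del b a (x c) = if c = a then 1 else 0 := by
  rw [del_apply, ← hb c, b.repr_self, Finsupp.single_apply]

/-- Any `K`-derivation is determined by its values on the `x a`. -/
theorem deriv_decomp (x : Fin d → R) (b : Module.Basis (Fin d) R (KaehlerDifferential K R))
    (hb : ∀ a : Fin d, b a = KaehlerDifferential.D K R (x a))
    {M : Type*} [AddCommGroup M] [Module R M] [Module K M] [IsScalarTower K R M]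
    (δ : Derivation K R M) (f : R) :
    δ f = ∑ a : Fin d, del b a f • δ (x a) := by
  have h0 : δ f = δ.liftKaehlerDifferential (KaehlerDifferential.D K R f) :=
    (Derivation.liftKaehlerDifferential_comp_D δ f).symm
  rw [h0, ← Module.Basis.sum_repr b (KaehlerDifferential.D K R f), map_sum]
  refine Finset.sum_congr rfl fun a _ => ?_
  rw [map_smul, hb a, Derivation.liftKaehlerDifferential_comp_D]
  rfl

end Del

end S1

namespace S1
open Paper Finset

set_option maxHeartbeats 1000000
set_option synthInstance.maxHeartbeats 400000

section Main

variable {K R : Type} [Field K] [CharZero K] [CommRing R] [Algebra K R] {d : ℕ}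

variable (R d) in
/-- The polynomial ring on the variables `X^a_i`, `|i| ≥ 1`. -/
abbrev PP : Type := MvPolynomial {p : Fin d × MIdx d // 1 ≤ deg p.2} R

variable (R d) in
/-- Power series over `PP`. -/
abbrev QQ : Type := MvPowerSeries (Fin d) (PP R d)

variable (R) in
/-- The universal series `ξ_a = ∑_{|i|≥1} X^a_i t^i`. -/
noncomputable def xi (a : Fin d) : QQ R d :=
  fun i => if h : 1 ≤ deg i then MvPolynomial.X ⟨(a, i), h⟩ else 0

theorem xi_coeff (a : Fin d) (i : MIdx d) :
    MvPowerSeries.coeff i (xi R a)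
      = if h : 1 ≤ deg i then MvPolynomial.X ⟨(a, i), h⟩ else 0 := rfl

/-- The derivation `Δ_a` acting on `R`-coefficients via `∂_a`. -/
noncomputable def Delta (b : Module.Basis (Fin d) R (KaehlerDifferential K R)) (a : Fin d) :
    Derivation K (QQ R d) (QQ R d) :=
  psderiv (pderiv' (del b a))

theorem Delta_coeff (b : Module.Basis (Fin d) R (KaehlerDifferential K R)) (a : Fin d)
    (u : QQ R d) (i : MIdx d) :
    MvPowerSeries.coeff i (Delta b a u)
      = pderiv' (del b a) (MvPowerSeries.coeff i u) := rfl

/-- The derivation `𝔇 = ∑ ξ_a Δ_a`. -/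
noncomputable def bigD (b : Module.Basis (Fin d) R (KaehlerDifferential K R)) :
    Derivation K (QQ R d) (QQ R d) :=
  ∑ a : Fin d, xi R a • Delta b a

theorem bigD_apply (b : Module.Basis (Fin d) R (KaehlerDifferential K R)) (u : QQ R d) :
    bigD b u = ∑ a : Fin d, xi R a * Delta b a u := by
  rw [bigD]
  rw [show ((∑ a : Fin d, xi R a • Delta b a) u)
      = ∑ a : Fin d, (xi R a • Delta b a) u from by
    induction (Finset.univ : Finset (Fin d)) using Finset.induction_on with
    | empty => rfl
    | insert _ _ h ih => rw [Finset.sum_insert h, Finset.sum_insert h, Derivation.add_apply, ih]]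
  exact Finset.sum_congr rfl fun a _ => by rw [Derivation.smul_apply, smul_eq_mul]

/-- "Order at least `n`" predicate on `QQ`. -/
def ordGE (n : ℕ) (u : QQ R d) : Prop :=
  ∀ i : MIdx d, deg i < n → MvPowerSeries.coeff i u = 0

theorem ordGE_zero (u : QQ R d) : ordGE 0 u := fun _ h => absurd h (Nat.not_lt_zero _)

theorem ordGE_mono {m n : ℕ} (h : m ≤ n) {u : QQ R d} (hu : ordGE n u) : ordGE m u :=
  fun i hi => hu i (lt_of_lt_of_le hi h)

theorem ordGE_mul {m n : ℕ} {u v : QQ R d} (hu : ordGE m u) (hv : ordGE n v) :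
    ordGE (m + n) (u * v) := by
  intro i hi
  rw [MvPowerSeries.coeff_mul]
  refine Finset.sum_eq_zero fun p hp => ?_
  have hadd : p.1 + p.2 = i := Finset.HasAntidiagonal.mem_antidiagonal.mp hp
  have hdeg : deg p.1 + deg p.2 < m + n := by
    rw [← deg_add, hadd]; exact hi
  rcases lt_or_ge (deg p.1) m with h | h
  · rw [hu p.1 h, zero_mul]
  · have : deg p.2 < n := by omega
    rw [hv p.2 this, mul_zero]

theorem ordGE_xi (a : Fin d) : ordGE 1 (xi R a) := by
  intro j hj
  rw [xi_coeff, dif_neg (by omega)]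

theorem ordGE_Delta (b : Module.Basis (Fin d) R (KaehlerDifferential K R)) (a : Fin d)
    {n : ℕ} {u : QQ R d} (hu : ordGE n u) : ordGE n (Delta b a u) := by
  intro j hj
  rw [Delta_coeff, hu j hj, map_zero]

theorem ordGE_bigD (b : Module.Basis (Fin d) R (KaehlerDifferential K R))
    {n : ℕ} {u : QQ R d} (hu : ordGE n u) : ordGE (n + 1) (bigD b u) := by
  intro i hi
  rw [bigD_apply, map_sum]
  refine Finset.sum_eq_zero fun a _ => ?_
  have := ordGE_mul (ordGE_xi a) (ordGE_Delta b a hu)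
  exact this i (by omega)

theorem ordGE_iter (b : Module.Basis (Fin d) R (KaehlerDifferential K R)) (u : QQ R d) (n : ℕ) :
    ordGE n ((⇑(bigD b))^[n] u) := by
  induction n with
  | zero => exact ordGE_zero _
  | succ n ih =>
    rw [Function.iterate_succ_apply']
    exact ordGE_bigD b ih

/-- Partial sums of the exponential `exp(𝔇)` applied to `f`. -/
noncomputable def SN (b : Module.Basis (Fin d) R (KaehlerDifferential K R)) (N : ℕ) (f : R) :
    QQ R d :=
  ∑ n ∈ Finset.range N,
    ((n.factorial : K)⁻¹) • (⇑(bigD b))^[n] (algebraMap R (QQ R d) f)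

/-- The Taylor coefficients `E f i`. -/
noncomputable def Efun (b : Module.Basis (Fin d) R (KaehlerDifferential K R)) (f : R) (i : MIdx d) :
    PP R d :=
  MvPowerSeries.coeff i (SN b (deg i + 1) f)

theorem SN_coeff_stable (b : Module.Basis (Fin d) R (KaehlerDifferential K R)) (f : R) (i : MIdx d)
    {N : ℕ} (hN : deg i < N) :
    MvPowerSeries.coeff i (SN b N f) = Efun b f i := by
  rw [Efun, SN, SN, map_sum, map_sum]
  symm
  apply Finset.sum_subset (Finset.range_subset_range.mpr (by omega))
  intro n hn hn'
  rw [LinearMap.map_smul_of_tower]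
  rw [ordGE_iter b _ n i (by simp only [Finset.mem_range] at hn'; omega), smul_zero]

theorem iter_add {K A : Type*} [CommRing K] [CommRing A] [Algebra K A]
    (D : Derivation K A A) (n : ℕ) (u v : A) :
    (⇑D)^[n] (u + v) = (⇑D)^[n] u + (⇑D)^[n] v := by
  induction n with
  | zero => rfl
  | succ n ih =>
    rw [Function.iterate_succ_apply', Function.iterate_succ_apply',
      Function.iterate_succ_apply', ih, map_add]

theorem SN_add (b : Module.Basis (Fin d) R (KaehlerDifferential K R)) (N : ℕ) (f g : R) :
    SN b N (f + g) = SN b N f + SN b N g := by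
  rw [SN, SN, SN, ← Finset.sum_add_distrib]
  refine Finset.sum_congr rfl fun n _ => ?_
  rw [map_add, iter_add, smul_add]

theorem Efun_add (b : Module.Basis (Fin d) R (KaehlerDifferential K R)) (f g : R) (i : MIdx d) :
    Efun b (f + g) i = Efun b f i + Efun b g i := by
  rw [Efun, Efun, Efun, SN_add, map_add]

theorem cK_mul {j k : ℕ} :
    (((j + k).factorial : K)⁻¹) * (((j + k).choose j : K))
      = ((j.factorial : K)⁻¹) * ((k.factorial : K)⁻¹) := by
  have h0 : ((k + j).choose j) * k.factorial * j.factorial = (k + j).factorial :=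
    Nat.add_choose_mul_factorial_mul_factorial k j
  have hc : ((k + j).choose j : K) * (k.factorial : K) * (j.factorial : K)
      = ((k + j).factorial : K) := by exact_mod_cast congrArg (Nat.cast : ℕ → K) h0
  have hj : (j.factorial : K) ≠ 0 := Nat.cast_ne_zero.mpr (Nat.factorial_ne_zero _)
  have hk : (k.factorial : K) ≠ 0 := Nat.cast_ne_zero.mpr (Nat.factorial_ne_zero _)
  have hn : ((k + j).factorial : K) ≠ 0 := Nat.cast_ne_zero.mpr (Nat.factorial_ne_zero _)
  rw [add_comm j k]
  field_simp
  linear_combination hc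

theorem Efun_mul (b : Module.Basis (Fin d) R (KaehlerDifferential K R)) (f g : R) (i : MIdx d) :
    Efun b (f * g) i
      = ∑ p ∈ Finset.HasAntidiagonal.antidiagonal i, Efun b f p.1 * Efun b g p.2 := by
  classical
  obtain ⟨N, hNdef⟩ : ∃ N, N = deg i + 1 := ⟨_, rfl⟩
  have hN1 : 1 ≤ N := by omega
  -- Step 1 : SN (2N) (fg) = sum over triangle
  have step1 : SN b (2 * N) (f * g)
      = ∑ n ∈ Finset.range (2 * N), ∑ p ∈ Finset.HasAntidiagonal.antidiagonal n,
          (((p.1.factorial : K)⁻¹) * ((p.2.factorial : K)⁻¹)) •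
            ((⇑(bigD b))^[p.1] (algebraMap R (QQ R d) f)
              * (⇑(bigD b))^[p.2] (algebraMap R (QQ R d) g)) := by
    rw [SN]
    refine Finset.sum_congr rfl fun n _ => ?_
    rw [map_mul, iter_leibniz, Finset.smul_sum]
    refine Finset.sum_congr rfl fun p hp => ?_
    have hpn : p.1 + p.2 = n := Finset.HasAntidiagonal.mem_antidiagonal.mp hp
    rw [← Nat.cast_smul_eq_nsmul K, smul_smul, ← hpn, cK_mul]
  -- Step 2 : triangle as biUnion
  have step2 : ∑ n ∈ Finset.range (2 * N), ∑ p ∈ Finset.HasAntidiagonal.antidiagonal n,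
          (((p.1.factorial : K)⁻¹) * ((p.2.factorial : K)⁻¹)) •
            ((⇑(bigD b))^[p.1] (algebraMap R (QQ R d) f)
              * (⇑(bigD b))^[p.2] (algebraMap R (QQ R d) g))
      = ∑ p ∈ (Finset.range (2 * N)).biUnion (fun n => Finset.HasAntidiagonal.antidiagonal n),
          (((p.1.factorial : K)⁻¹) * ((p.2.factorial : K)⁻¹)) •
            ((⇑(bigD b))^[p.1] (algebraMap R (QQ R d) f)
              * (⇑(bigD b))^[p.2] (algebraMap R (QQ R d) g)) := by
    refine (Finset.sum_biUnion ?_).symm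
    intro m _ n _ hmn
    simp only [Function.onFun]
    rw [Finset.disjoint_left]
    intro p hpm hpn
    exact hmn ((Finset.HasAntidiagonal.mem_antidiagonal.mp hpm).symm.trans (Finset.HasAntidiagonal.mem_antidiagonal.mp hpn))
  -- Step 3 : square
  have step3 : SN b N f * SN b N g
      = ∑ p ∈ Finset.range N ×ˢ Finset.range N,
          (((p.1.factorial : K)⁻¹) * ((p.2.factorial : K)⁻¹)) •
            ((⇑(bigD b))^[p.1] (algebraMap R (QQ R d) f)
              * (⇑(bigD b))^[p.2] (algebraMap R (QQ R d) g)) := by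
    rw [SN, SN, Finset.sum_mul_sum, Finset.sum_product]
    refine Finset.sum_congr rfl fun j _ => Finset.sum_congr rfl fun k _ => ?_
    rw [smul_mul_smul_comm]
  -- square ⊆ triangle
  have hsub : Finset.range N ×ˢ Finset.range N
      ⊆ (Finset.range (2 * N)).biUnion (fun n => Finset.HasAntidiagonal.antidiagonal n) := by
    intro p hp
    rw [Finset.mem_product, Finset.mem_range, Finset.mem_range] at hp
    exact Finset.mem_biUnion.mpr ⟨p.1 + p.2, Finset.mem_range.mpr (by omega),
      Finset.HasAntidiagonal.mem_antidiagonal.mpr rfl⟩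
  -- coefficient-level comparison
  have hvanish : ∀ p ∈ (Finset.range (2 * N)).biUnion (fun n => Finset.HasAntidiagonal.antidiagonal n),
      p ∉ Finset.range N ×ˢ Finset.range N →
        MvPowerSeries.coeff i
          ((((p.1.factorial : K)⁻¹) * ((p.2.factorial : K)⁻¹)) •
            ((⇑(bigD b))^[p.1] (algebraMap R (QQ R d) f)
              * (⇑(bigD b))^[p.2] (algebraMap R (QQ R d) g))) = 0 := by
    intro p _ hp
    rw [Finset.mem_product, Finset.mem_range, Finset.mem_range] at hp
    push_neg at hp
    have hbig : ordGE N ((⇑(bigD b))^[p.1] (algebraMap R (QQ R d) f)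
        * (⇑(bigD b))^[p.2] (algebraMap R (QQ R d) g)) := by
      rcases lt_or_ge p.1 N with h1 | h1
      · have h2 : N ≤ p.2 := hp h1
        have := ordGE_mul (ordGE_zero ((⇑(bigD b))^[p.1] (algebraMap R (QQ R d) f)))
          (ordGE_mono h2 (ordGE_iter b (algebraMap R (QQ R d) g) p.2))
        simpa using this
      · have := ordGE_mul (ordGE_mono h1 (ordGE_iter b (algebraMap R (QQ R d) f) p.1))
          (ordGE_zero ((⇑(bigD b))^[p.2] (algebraMap R (QQ R d) g)))
        simpa using this
    rw [LinearMap.map_smul_of_tower, hbig i (by omega), smul_zero]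
  have key : MvPowerSeries.coeff i (SN b (2 * N) (f * g))
      = MvPowerSeries.coeff i (SN b N f * SN b N g) := by
    rw [step1, step2, step3, map_sum, map_sum]
    exact (Finset.sum_subset hsub hvanish).symm
  have lhs : Efun b (f * g) i = MvPowerSeries.coeff i (SN b (2 * N) (f * g)) :=
    (SN_coeff_stable b (f * g) i (by omega)).symm
  rw [lhs, key, MvPowerSeries.coeff_mul]
  refine Finset.sum_congr rfl fun p hp => ?_
  have hpi : p.1 + p.2 = i := Finset.HasAntidiagonal.mem_antidiagonal.mp hp
  have hd : deg p.1 + deg p.2 = deg i := by rw [← deg_add, hpi]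
  rw [SN_coeff_stable b f p.1 (by omega), SN_coeff_stable b g p.2 (by omega)]

end Main

end S1

namespace S1
open Paper Finset

set_option maxHeartbeats 1000000
set_option synthInstance.maxHeartbeats 400000

section Main2

variable {K R : Type} [Field K] [CharZero K] [CommRing R] [Algebra K R] {d : ℕ}

theorem deg_zero : deg (0 : MIdx d) = 0 := by simp [deg]

theorem coeff_iota (f : R) (i : MIdx d) :
    MvPowerSeries.coeff i (algebraMap R (QQ R d) f)
      = if i = 0 then MvPolynomial.C f else 0 := by
  rw [MvPowerSeries.algebraMap_apply, MvPowerSeries.coeff_C]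
  simp [MvPolynomial.algebraMap_eq]

theorem Delta_iota (b : Module.Basis (Fin d) R (KaehlerDifferential K R)) (a : Fin d) (f : R) :
    Delta b a (algebraMap R (QQ R d) f) = algebraMap R (QQ R d) (del b a f) := by
  apply MvPowerSeries.ext
  intro i
  rw [Delta_coeff, coeff_iota, coeff_iota]
  split_ifs with h
  · rw [pderiv'_C]
  · rw [map_zero]

theorem bigD_iota (b : Module.Basis (Fin d) R (KaehlerDifferential K R)) (f : R) :
    bigD b (algebraMap R (QQ R d) f)
      = ∑ a : Fin d, xi R a * algebraMap R (QQ R d) (del b a f) := by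
  rw [bigD_apply]
  exact Finset.sum_congr rfl fun a _ => by rw [Delta_iota]

theorem bigD_iota_x (x : Fin d → R) (b : Module.Basis (Fin d) R (KaehlerDifferential K R))
    (hb : ∀ a : Fin d, b a = KaehlerDifferential.D K R (x a)) (c : Fin d) :
    bigD b (algebraMap R (QQ R d) (x c)) = xi R c := by
  rw [bigD_iota]
  rw [Finset.sum_eq_single c]
  · rw [del_x x b hb c c, if_pos rfl, map_one, mul_one]
  · intro a _ hac
    rw [del_x x b hb a c, if_neg (fun hca => hac hca.symm), map_zero, mul_zero]
  · intro hc; exact absurd (Finset.mem_univ c) hc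

theorem bigD_xi (b : Module.Basis (Fin d) R (KaehlerDifferential K R)) (a : Fin d) :
    bigD b (xi R a) = 0 := by
  rw [bigD_apply]
  refine Finset.sum_eq_zero fun a' _ => ?_
  have h0 : Delta b a' (xi R a) = 0 := by
    apply MvPowerSeries.ext
    intro i
    rw [Delta_coeff, xi_coeff]
    split_ifs
    · rw [pderiv'_X, map_zero]
    · rw [map_zero, map_zero]
  rw [h0, mul_zero]

theorem iter_iota_x (x : Fin d → R) (b : Module.Basis (Fin d) R (KaehlerDifferential K R))
    (hb : ∀ a : Fin d, b a = KaehlerDifferential.D K R (x a)) (c : Fin d) {n : ℕ}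
    (hn : 2 ≤ n) :
    (⇑(bigD b))^[n] (algebraMap R (QQ R d) (x c)) = 0 := by
  obtain ⟨m, rfl⟩ : ∃ m, n = m + 2 := ⟨n - 2, by omega⟩
  rw [Function.iterate_add_apply (⇑(bigD b)) m 2]
  rw [show ((⇑(bigD b))^[2]) (algebraMap R (QQ R d) (x c))
      = bigD b (bigD b (algebraMap R (QQ R d) (x c))) from rfl]
  rw [bigD_iota_x x b hb, bigD_xi]
  exact Function.iterate_fixed (map_zero _) m

theorem bigD_iota_algebraMap (b : Module.Basis (Fin d) R (KaehlerDifferential K R)) (c : K) :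
    bigD b (algebraMap R (QQ R d) (algebraMap K R c)) = 0 := by
  rw [bigD_iota]
  refine Finset.sum_eq_zero fun a _ => ?_
  rw [Derivation.map_algebraMap, map_zero, mul_zero]

theorem Efun_eq_sum (b : Module.Basis (Fin d) R (KaehlerDifferential K R)) (f : R) (i : MIdx d) :
    Efun b f i = ∑ n ∈ Finset.range (deg i + 1),
      ((n.factorial : K)⁻¹) •
        MvPowerSeries.coeff i ((⇑(bigD b))^[n] (algebraMap R (QQ R d) f)) := by
  rw [Efun, SN, map_sum]
  exact Finset.sum_congr rfl fun n _ => LinearMap.map_smul_of_tower _ _ _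

theorem Efun_zero_idx (b : Module.Basis (Fin d) R (KaehlerDifferential K R)) (f : R) :
    Efun b f 0 = MvPolynomial.C f := by
  rw [Efun_eq_sum, deg_zero]
  rw [Finset.sum_range_one]
  rw [Function.iterate_zero_apply, coeff_iota, if_pos rfl]
  simp

theorem Efun_x (x : Fin d → R) (b : Module.Basis (Fin d) R (KaehlerDifferential K R))
    (hb : ∀ a : Fin d, b a = KaehlerDifferential.D K R (x a)) (a : Fin d) (i : MIdx d)
    (h : 1 ≤ deg i) :
    Efun b (x a) i = MvPolynomial.X ⟨(a, i), h⟩ := by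
  have hi0 : i ≠ 0 := by
    intro h0
    rw [h0, deg_zero] at h
    omega
  rw [Efun_eq_sum]
  rw [Finset.sum_eq_single_of_mem 1 (Finset.mem_range.mpr (by omega))]
  · rw [Function.iterate_one, bigD_iota_x x b hb, xi_coeff, dif_pos h]
    simp
  · intro n hn hne
    rcases Nat.lt_or_ge n 2 with h2 | h2
    · have hn0 : n = 0 := by omega
      subst hn0
      rw [Function.iterate_zero_apply, coeff_iota, if_neg hi0, smul_zero]
    · rw [iter_iota_x x b hb a h2, map_zero, smul_zero]

theorem Efun_algebraMap (b : Module.Basis (Fin d) R (KaehlerDifferential K R)) (c : K) (i : MIdx d)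
    (h : 1 ≤ deg i) :
    Efun b (algebraMap K R c) i = 0 := by
  have hi0 : i ≠ 0 := by
    intro h0
    rw [h0, deg_zero] at h
    omega
  rw [Efun_eq_sum]
  refine Finset.sum_eq_zero fun n _ => ?_
  rcases Nat.eq_zero_or_pos n with rfl | hp
  · rw [Function.iterate_zero_apply, coeff_iota, if_neg hi0, smul_zero]
  · obtain ⟨m, rfl⟩ : ∃ m, n = m + 1 := ⟨n - 1, by omega⟩
    rw [Function.iterate_succ_apply, bigD_iota_algebraMap,
      Function.iterate_fixed (map_zero _) m, map_zero, smul_zero]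

end Main2

end S1

namespace S1
open Paper Finset

set_option maxHeartbeats 1000000
set_option synthInstance.maxHeartbeats 400000

section Rdside

variable {K R : Type} [Field K] [CharZero K] [CommRing R] [Algebra K R] {d : ℕ}

noncomputable instance instTowerRd : IsScalarTower K R (Rd K R d) :=
  Ideal.Quotient.isScalarTower K R (Ideal.span (relSet K R d))

theorem algebraMap_Rd (r : R) : algebraMap R (Rd K R d) r
    = Ideal.Quotient.mk (Ideal.span (relSet K R d)) (MvPolynomial.C r) := rfl

theorem rel_zero {p : MvPolynomial (R × MIdx d) R} (hp : p ∈ relSet K R d) :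
    Ideal.Quotient.mk (Ideal.span (relSet K R d)) p = 0 :=
  Ideal.Quotient.eq_zero_iff_mem.mpr (Ideal.subset_span hp)

theorem gen_add (f g : R) (i : MIdx d) :
    gen K R (f + g) i = gen K R f i + gen K R g i := by
  have h := rel_zero (K := K) (R := R) (d := d) (Or.inl ⟨f, g, i, rfl⟩)
  rw [map_sub, map_sub, sub_sub, sub_eq_zero] at h
  exact h

theorem gen_mul (f g : R) (i : MIdx d) :
    gen K R (f * g) i = ∑ p ∈ Finset.HasAntidiagonal.antidiagonal i, gen K R f p.1 * gen K R g p.2 := by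
  have h := rel_zero (K := K) (R := R) (d := d) (Or.inr (Or.inl ⟨f, g, i, rfl⟩))
  rw [map_sub, sub_eq_zero, map_sum] at h
  simp only [map_mul] at h
  exact h

theorem gen_zero_idx (f : R) : gen K R f 0 = algebraMap R (Rd K R d) f := by
  have h := rel_zero (K := K) (R := R) (d := d) (Or.inr (Or.inr (Or.inl ⟨f, rfl⟩)))
  rw [map_sub, sub_eq_zero] at h
  exact h

theorem gen_algebraMap (c : K) (i : MIdx d) (h : 1 ≤ deg i) :
    gen K R (algebraMap K R c) i = 0 :=
  rel_zero (Or.inr (Or.inr (Or.inr ⟨c, i, h, rfl⟩)))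

/-- The lift of `Efun` to the free polynomial algebra. -/
noncomputable def philift (b : Module.Basis (Fin d) R (KaehlerDifferential K R)) :
    MvPolynomial (R × MIdx d) R →ₐ[R] PP R d :=
  MvPolynomial.aeval (fun v : R × MIdx d => Efun b v.1 v.2)

theorem philift_rel (b : Module.Basis (Fin d) R (KaehlerDifferential K R)) :
    ∀ p ∈ relSet K R d, philift (K := K) b p = 0 := by
  rintro p (⟨f, g, i, rfl⟩ | ⟨f, g, i, rfl⟩ | ⟨f, rfl⟩ | ⟨c, i, hi, rfl⟩)
  · simp only [philift, map_sub, MvPolynomial.aeval_X]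
    rw [Efun_add]; ring
  · simp only [philift, map_sub, map_sum, map_mul, MvPolynomial.aeval_X]
    rw [Efun_mul]; exact sub_self _
  · simp only [philift, map_sub, MvPolynomial.aeval_X, MvPolynomial.aeval_C]
    rw [Efun_zero_idx, MvPolynomial.algebraMap_eq]
    exact sub_self _
  · simp only [philift, MvPolynomial.aeval_X]
    exact Efun_algebraMap b c i hi

theorem span_le_ker (b : Module.Basis (Fin d) R (KaehlerDifferential K R)) :
    ∀ a ∈ Ideal.span (relSet K R d), philift (K := K) b a = 0 := by
  intro a ha
  have hle : Ideal.span (relSet K R d)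
      ≤ RingHom.ker (philift (K := K) b : MvPolynomial (R × MIdx d) R →+* PP R d) :=
    Ideal.span_le.mpr (fun p hp => RingHom.mem_ker.mpr (philift_rel b p hp))
  exact RingHom.mem_ker.mp (hle ha)

/-- The induced map `R^𝐝 → PP`. -/
noncomputable def phi (b : Module.Basis (Fin d) R (KaehlerDifferential K R)) :
    Rd K R d →ₐ[R] PP R d :=
  Ideal.Quotient.liftₐ (Ideal.span (relSet K R d)) (philift b) (span_le_ker b)

theorem phi_gen (b : Module.Basis (Fin d) R (KaehlerDifferential K R)) (f : R) (i : MIdx d) :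
    phi (K := K) b (gen K R f i) = Efun b f i := by
  have h2 := congrArg (fun g : MvPolynomial (R × MIdx d) R →ₐ[R] PP R d =>
      g (MvPolynomial.X (f, i)))
    (Ideal.Quotient.liftₐ_comp (Ideal.span (relSet K R d)) (philift (K := K) b)
      (span_le_ker b))
  simp only [AlgHom.coe_comp, Function.comp_apply, Ideal.Quotient.mkₐ_eq_mk] at h2
  exact h2.trans (by rw [philift, MvPolynomial.aeval_X])

/-- The algebra map of the statement. -/
noncomputable def psiA (x : Fin d → R) : PP R d →ₐ[R] Rd K R d :=
  MvPolynomial.aeval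
    (fun v : {p : Fin d × MIdx d // 1 ≤ deg p.2} => gen K R (x v.1.1) v.1.2)

noncomputable instance instModKRd : @Module K (Rd K R d) _ AddCommGroup.toAddCommMonoid :=
  Algebra.toModule
noncomputable instance instModRRd : @Module R (Rd K R d) _ AddCommGroup.toAddCommMonoid :=
  Algebra.toModule
noncomputable instance instTowerRd' : IsScalarTower K R (Rd K R d) :=
  Ideal.Quotient.isScalarTower K R (Ideal.span (relSet K R d))

theorem gen_eq_psi (x : Fin d → R) (b : Module.Basis (Fin d) R (KaehlerDifferential K R))
    (hb : ∀ a : Fin d, b a = KaehlerDifferential.D K R (x a)) :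
    ∀ (n : ℕ) (i : MIdx d), deg i = n → ∀ f : R,
      gen K R f i = psiA (K := K) x (Efun b f i) := by
  intro n
  induction n using Nat.strong_induction_on with
  | _ n IH =>
  intro i hi f
  rcases Nat.eq_zero_or_pos n with rfl | hpos
  · have h0 : i = 0 := deg_eq_zero hi
    subst h0
    rw [gen_zero_idx, Efun_zero_idx, psiA, MvPolynomial.aeval_C]
  · have hψ0 : ∀ g : R, psiA (K := K) x (Efun b g 0) = algebraMap R (Rd K R d) g := by
      intro g; rw [Efun_zero_idx, psiA, MvPolynomial.aeval_C]
    have hi0 : i ≠ 0 := fun h0 => by rw [h0, deg_zero] at hi; omega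
    have hδ_leib : ∀ f g : R,
        gen K R (f * g) i - psiA (K := K) x (Efun b (f * g) i)
          = algebraMap R (Rd K R d) f *
              (gen K R g i - psiA (K := K) x (Efun b g i))
            + algebraMap R (Rd K R d) g *
              (gen K R f i - psiA (K := K) x (Efun b f i)) := by
      intro f g
      have e2 : psiA (K := K) x (Efun b (f * g) i)
          = ∑ p ∈ Finset.HasAntidiagonal.antidiagonal i,
              psiA (K := K) x (Efun b f p.1) * psiA (K := K) x (Efun b g p.2) := by
        rw [Efun_mul, map_sum]
        exact Finset.sum_congr rfl fun p _ => map_mul _ _ _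
      rw [gen_mul, e2]
      erw [← Finset.sum_sub_distrib]
      have hpairsub : ({((0 : MIdx d), i), (i, (0 : MIdx d))} : Finset (MIdx d × MIdx d))
          ⊆ Finset.HasAntidiagonal.antidiagonal i := by
        intro p hp
        rcases Finset.mem_insert.mp hp with rfl | hp
        · exact Finset.HasAntidiagonal.mem_antidiagonal.mpr (zero_add i)
        · rw [Finset.mem_singleton] at hp; subst hp
          exact Finset.HasAntidiagonal.mem_antidiagonal.mpr (add_zero i)
      have hvan : ∀ p ∈ Finset.HasAntidiagonal.antidiagonal i,
          p ∉ ({((0 : MIdx d), i), (i, (0 : MIdx d))} : Finset (MIdx d × MIdx d)) →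
          gen K R f p.1 * gen K R g p.2
            - psiA (K := K) x (Efun b f p.1) * psiA (K := K) x (Efun b g p.2) = 0 := by
        intro p hp hnot
        have hpi : p.1 + p.2 = i := Finset.HasAntidiagonal.mem_antidiagonal.mp hp
        have hd : deg p.1 + deg p.2 = n := by rw [← deg_add, hpi, hi]
        simp only [Finset.mem_insert, Finset.mem_singleton] at hnot
        push_neg at hnot
        have h1 : deg p.1 < n := by
          rcases Nat.lt_or_ge (deg p.1) n with h | h
          · exact h
          · exfalso
            have hz : deg p.2 = 0 := by omega
            have hp2 : p.2 = 0 := deg_eq_zero hz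
            have hp1 : p.1 = i := by rw [← hpi, hp2, add_zero]
            exact hnot.2 (Prod.ext hp1 hp2)
        have h2 : deg p.2 < n := by
          rcases Nat.lt_or_ge (deg p.2) n with h | h
          · exact h
          · exfalso
            have hz : deg p.1 = 0 := by omega
            have hp1 : p.1 = 0 := deg_eq_zero hz
            have hp2 : p.2 = i := by rw [← hpi, hp1, zero_add]
            exact hnot.1 (Prod.ext hp1 hp2)
        rw [IH (deg p.1) (by omega) p.1 rfl f, IH (deg p.2) (by omega) p.2 rfl g, sub_self]
      erw [← Finset.sum_subset hpairsub hvan]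
      have hne : ((0 : MIdx d), i) ≠ (i, (0 : MIdx d)) := by
        intro hcontr
        exact hi0 (congrArg Prod.fst hcontr).symm
      rw [Finset.sum_pair hne]
      rw [gen_zero_idx f, gen_zero_idx g, hψ0 f, hψ0 g]
      ring
    have hδ_alg : ∀ c : K,
        gen K R (algebraMap K R c) i - psiA (K := K) x (Efun b (algebraMap K R c) i) = 0 := by
      intro c
      rw [gen_algebraMap c i (by omega), Efun_algebraMap b c i (by omega), map_zero, sub_zero]
    let L : R →ₗ[K] Rd K R d :=
      { toFun := fun g => gen K R g i - psiA (K := K) x (Efun b g i)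
        map_add' := fun f g => by
          show gen K R (f + g) i - psiA (K := K) x (Efun b (f + g) i)
            = (gen K R f i - psiA (K := K) x (Efun b f i))
              + (gen K R g i - psiA (K := K) x (Efun b g i))
          rw [gen_add, Efun_add, map_add]; ring
        map_smul' := fun c g => by
          simp only [RingHom.id_apply]
          show gen K R (c • g) i - psiA (K := K) x (Efun b (c • g) i)
            = c • (gen K R g i - psiA (K := K) x (Efun b g i))
          rw [Algebra.smul_def c g, hδ_leib (algebraMap K R c) g, hδ_alg c, mul_zero,
            add_zero, ← IsScalarTower.algebraMap_apply K R (Rd K R d), ← Algebra.smul_def] }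
    let Dd : Derivation K R (Rd K R d) := Derivation.mk' L (fun f g => by
      show gen K R (f * g) i - psiA (K := K) x (Efun b (f * g) i)
        = f • (gen K R g i - psiA (K := K) x (Efun b g i))
          + g • (gen K R f i - psiA (K := K) x (Efun b f i))
      rw [hδ_leib f g, Algebra.smul_def, Algebra.smul_def])
    have hDx : ∀ a : Fin d, Dd (x a) = 0 := by
      intro a
      show gen K R (x a) i - psiA (K := K) x (Efun b (x a) i) = 0
      have h1 : 1 ≤ deg i := by omega
      rw [Efun_x x b hb a i h1, psiA, MvPolynomial.aeval_X, sub_self]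
    have hzero : Dd f = 0 := by
      erw [deriv_decomp x b hb Dd f]
      refine Finset.sum_eq_zero fun a _ => ?_
      erw [hDx a, smul_zero]
    have hfin : gen K R f i - psiA (K := K) x (Efun b f i) = 0 := hzero
    exact sub_eq_zero.mp hfin

end Rdside

end S1


set_option maxHeartbeats 1000000
set_option synthInstance.maxHeartbeats 400000

/-- If `Ω¹_{R/K}` is free with basis `dx¹,…,dxᵈ`, then the
`R`-algebra homomorphism from the polynomial `R`-algebra on variables `X^a_i`
(`1 ≤ a ≤ d`, `|i| ≥ 1`) to `R^𝐝` sending `X^a_i` to `(x^a)_i` is bijective. -/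
theorem statement1 (K R : Type) [Field K] [CharZero K] [CommRing R] [Algebra K R]
    (d : ℕ) (hd : 1 ≤ d) (x : Fin d → R)
    (b : Module.Basis (Fin d) R (KaehlerDifferential K R))
    (hb : ∀ a : Fin d, b a = KaehlerDifferential.D K R (x a)) :
    Function.Bijective
      (MvPolynomial.aeval
        (fun v : {p : Fin d × Paper.MIdx d // 1 ≤ Paper.deg p.2} =>
          Paper.gen K R (x v.1.1) v.1.2) :
        MvPolynomial {p : Fin d × Paper.MIdx d // 1 ≤ Paper.deg p.2} R →ₐ[R] Paper.Rd K R d) := by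
  classical
  constructor
  · -- injectivity via the retraction `phi`
    have hcomp : (S1.phi (K := K) b).comp
        (MvPolynomial.aeval
          (fun v : {p : Fin d × Paper.MIdx d // 1 ≤ Paper.deg p.2} =>
            Paper.gen K R (x v.1.1) v.1.2) :
          MvPolynomial {p : Fin d × Paper.MIdx d // 1 ≤ Paper.deg p.2} R →ₐ[R] Paper.Rd K R d)
        = AlgHom.id R (S1.PP R d) := by
      apply MvPolynomial.algHom_ext
      intro v
      rw [AlgHom.comp_apply, MvPolynomial.aeval_X, AlgHom.id_apply, S1.phi_gen,
        S1.Efun_x x b hb v.1.1 v.1.2 v.2]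
    have hli : ∀ p : MvPolynomial {p : Fin d × Paper.MIdx d // 1 ≤ Paper.deg p.2} R,
        S1.phi (K := K) b
          ((MvPolynomial.aeval
            (fun v : {p : Fin d × Paper.MIdx d // 1 ≤ Paper.deg p.2} =>
              Paper.gen K R (x v.1.1) v.1.2) :
            MvPolynomial {p : Fin d × Paper.MIdx d // 1 ≤ Paper.deg p.2} R →ₐ[R]
              Paper.Rd K R d) p) = p := by
      intro p
      have h := congrArg (fun g : MvPolynomial {p : Fin d × Paper.MIdx d // 1 ≤ Paper.deg p.2} R
          →ₐ[R] S1.PP R d => g p) hcomp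
      simpa using h
    exact fun p q h => by rw [← hli p, ← hli q, h]
  · -- surjectivity
    intro y
    obtain ⟨q, rfl⟩ := Ideal.Quotient.mk_surjective (I := Ideal.span (Paper.relSet K R d)) y
    suffices h : Ideal.Quotient.mk (Ideal.span (Paper.relSet K R d)) q ∈
        (MvPolynomial.aeval
          (fun v : {p : Fin d × Paper.MIdx d // 1 ≤ Paper.deg p.2} =>
            Paper.gen K R (x v.1.1) v.1.2) :
          MvPolynomial {p : Fin d × Paper.MIdx d // 1 ≤ Paper.deg p.2} R →ₐ[R]
            Paper.Rd K R d).range by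
      obtain ⟨p, hp⟩ := h
      exact ⟨p, hp⟩
    induction q using MvPolynomial.induction_on with
    | C r =>
      exact (AlgHom.mem_range _).mpr
        ⟨MvPolynomial.C r, (MvPolynomial.aeval_C _ r).trans rfl⟩
    | add p q hp hq =>
      rw [map_add]
      exact Subalgebra.add_mem _ hp hq
    | mul_X p v hp =>
      rw [map_mul]
      refine Subalgebra.mul_mem _ hp ?_
      exact (AlgHom.mem_range _).mpr ⟨S1.Efun b v.1 v.2,
        (S1.gen_eq_psi x b hb (Paper.deg v.2) v.2 rfl v.1).symm⟩
end

section
/- Let A be a commutative ring, let D_1,…,D_d be derivations of A that pairwise commute (⁅D_c, D_{c'}⁆ = 0 for all c, c'), and let J be an invertible d×d matrix over A whose entries satisfy the symmetry condition D_c(J^a_b) = D_b(J^a_c) for all a, b, c. Define, for each a ∈ {1,…,d}, the derivation X_a := Σ_{c=1}^d (J^{-1})^c_a • D_c, using the A-module structure on derivations. Then the X_a pairwise commute: ⁅X_a, X_b⁆ = 0 for all a, b. -/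
/-- Let `A` be a commutative ring, `D_1,…,D_d` pairwise commuting
derivations of `A`, and `J` an invertible `d×d` matrix over `A` satisfying the
symmetry `D_c(J^a_b) = D_b(J^a_c)`. Then the derivations
`X_a = Σ_c (J⁻¹)^c_a • D_c` pairwise commute. -/
theorem statement12 (d : ℕ) (A : Type*) [CommRing A]
    (D : Fin d → Derivation ℤ A A)
    (hcomm : ∀ (c c' : Fin d) (z : A), D c (D c' z) = D c' (D c z))
    (J : Matrix (Fin d) (Fin d) A) (hJ : IsUnit J)
    (hsym : ∀ a b c : Fin d, D c (J a b) = D b (J a c)) :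
    ∀ (a b : Fin d) (y : A),
      (∑ c : Fin d, J⁻¹ c a • D c) ((∑ c : Fin d, J⁻¹ c b • D c) y) =
      (∑ c : Fin d, J⁻¹ c b • D c) ((∑ c : Fin d, J⁻¹ c a • D c) y) := by
  have hdet : IsUnit J.det := (Matrix.isUnit_iff_isUnit_det J).mp hJ
  have hKJ : J⁻¹ * J = 1 := Matrix.nonsing_inv_mul J hdet
  have hJK : J * J⁻¹ = 1 := Matrix.mul_nonsing_inv J hdet
  set K := J⁻¹ with hK
  -- evaluation of a sum of derivations
  have hsum : ∀ (r : Fin d → A) (x : A),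
      (∑ c : Fin d, r c • D c) x = ∑ c : Fin d, r c * D c x := by
    intro r x
    have h := map_sum (Derivation.coeFnAddMonoidHom : Derivation ℤ A A →+ (A → A))
      (fun c => r c • D c) Finset.univ
    rw [show ⇑(∑ c : Fin d, r c • D c) = ∑ c : Fin d, ⇑(r c • D c) from h, Finset.sum_apply]
    simp [Derivation.smul_apply]
  -- derivative of the inverse matrix
  have dK : ∀ (c e b : Fin d),
      D c (K e b) = -∑ q, ∑ p, K e p * D c (J p q) * K q b := by
    intro c e b
    have h0 : ∀ q, ∑ p, D c (K e p) * J p q = -∑ p, K e p * D c (J p q) := by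
      intro q
      have h1 : ∑ p, K e p * J p q = (1 : Matrix (Fin d) (Fin d) A) e q := by
        rw [← Matrix.mul_apply, hKJ]
      have h2 := congrArg (D c) h1
      rw [map_sum] at h2
      simp only [Derivation.leibniz, smul_eq_mul] at h2
      have h3 : D c ((1 : Matrix (Fin d) (Fin d) A) e q) = 0 := by
        rcases eq_or_ne e q with h | h <;> simp [Matrix.one_apply, h]
      rw [h3, Finset.sum_add_distrib] at h2
      have h4 : ∑ p, D c (K e p) * J p q = ∑ p, J p q * D c (K e p) := by
        apply Finset.sum_congr rfl; intros; ring
      rw [h4, eq_neg_iff_add_eq_zero, add_comm]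
      exact h2
    calc D c (K e b)
        = ∑ p, D c (K e p) * (1 : Matrix (Fin d) (Fin d) A) p b := by
          simp [Matrix.one_apply]
      _ = ∑ p, D c (K e p) * ∑ q, J p q * K q b := by
          apply Finset.sum_congr rfl; intro p _
          rw [← Matrix.mul_apply, hJK]
      _ = ∑ p, ∑ q, D c (K e p) * J p q * K q b := by
          apply Finset.sum_congr rfl; intro p _
          rw [Finset.mul_sum]; apply Finset.sum_congr rfl; intros; ring
      _ = ∑ q, ∑ p, D c (K e p) * J p q * K q b := Finset.sum_comm
      _ = ∑ q, (∑ p, D c (K e p) * J p q) * K q b := by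
          apply Finset.sum_congr rfl; intro q _; rw [Finset.sum_mul]
      _ = ∑ q, (-∑ p, K e p * D c (J p q)) * K q b := by
          apply Finset.sum_congr rfl; intro q _; rw [h0]
      _ = -∑ q, ∑ p, K e p * D c (J p q) * K q b := by
          rw [← Finset.sum_neg_distrib]
          apply Finset.sum_congr rfl; intro q _
          rw [neg_mul, Finset.sum_mul]
  -- key symmetric identity
  have key : ∀ e a b : Fin d,
      ∑ c, K c a * D c (K e b) = ∑ c, K c b * D c (K e a) := by
    intro e a b
    simp only [dK]
    have expand : ∀ a b : Fin d,
        ∑ c, K c a * -(∑ q, ∑ p, K e p * D c (J p q) * K q b)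
          = -∑ c, ∑ q, ∑ p, K c a * (K e p * D c (J p q) * K q b) := by
      intro a b
      simp only [mul_neg, Finset.mul_sum, Finset.sum_neg_distrib]
    rw [expand, expand, neg_inj, Finset.sum_comm]
    apply Finset.sum_congr rfl; intro x _
    apply Finset.sum_congr rfl; intro y _
    apply Finset.sum_congr rfl; intro p _
    rw [hsym p x y]
    ring
  intro a b y
  simp only [hsum, map_sum, Derivation.leibniz, smul_eq_mul, Finset.mul_sum, mul_add,
    Finset.sum_add_distrib]
  congr 1
  · rw [Finset.sum_comm]
    apply Finset.sum_congr rfl; intro u _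
    apply Finset.sum_congr rfl; intro v _
    rw [hcomm v u y]
    ring
  · have p2 : ∀ a b : Fin d,
        ∑ c, ∑ e, K c a * (D e y * D c (K e b))
          = ∑ e, D e y * ∑ c, K c a * D c (K e b) := by
      intro a b
      rw [Finset.sum_comm]
      apply Finset.sum_congr rfl; intro e _
      rw [Finset.mul_sum]
      apply Finset.sum_congr rfl; intros; ring
    rw [p2, p2]
    apply Finset.sum_congr rfl; intro e _
    rw [key]
end

section
/- Let n be a natural number and let G be a simple graph on the vertex set Fin (n+1), with distinguished vertex h := Fin.last n. Assume: (a) G is connected; (b) G is 1-vertex irreducible; (c) every vertex of G has degree at least 3; and (d) G admits an orientation r such that every vertex other than h has at most one outgoing edge. Then n ≥ 3 and there exists a permutation σ of Fin (n+1) with σ(h) = h such that σ is a graph isomorphism from G onto the wheel graph W_n: for all u, v ∈ Fin (n+1), G.Adj u v holds if and only if W_n.Adj (σ u) (σ v). -/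
namespace Paper

/-- The wheel graph `W_n` on `Fin (n+1)`: the hub `Fin.last n` is adjacent to each
of the `n` rim vertices, and two rim vertices are adjacent iff they differ by
`±1` modulo `n`. -/
def wheel (n : ℕ) : SimpleGraph (Fin (n + 1)) where
  Adj u v := u ≠ v ∧
    (u = Fin.last n ∨ v = Fin.last n ∨
      ((u : ℕ) + 1) % n = (v : ℕ) ∨ ((v : ℕ) + 1) % n = (u : ℕ))
  symm := by
    constructor
    intro u v hv
    refine ⟨hv.1.symm, ?_⟩
    tauto
  loopless := by
    constructor
    intro v hv
    exact hv.1 rfl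

end Paper

/-- A connected, 1-vertex irreducible simple graph on `Fin (n+1)`
in which every vertex has degree at least 3, admitting an orientation in which
every vertex other than `h = Fin.last n` has at most one outgoing edge, satisfies
`n ≥ 3` and is isomorphic to the wheel `W_n` via a permutation fixing `h`. -/
theorem statement14 (n : ℕ) (G : SimpleGraph (Fin (n + 1))) [DecidableRel G.Adj]
    (hconn : G.Connected)
    (hirr : ∀ v : Fin (n + 1),
      (SimpleGraph.induce ({v}ᶜ : Set (Fin (n + 1))) G).Connected)
    (hdeg : ∀ v : Fin (n + 1), 3 ≤ G.degree v)
    (r : Fin (n + 1) → Fin (n + 1) → Prop)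
    (hor : ∀ u v, G.Adj u v ↔ (r u v ∨ r v u))
    (hna : ∀ u v, ¬ (r u v ∧ r v u))
    (hout : ∀ u, u ≠ Fin.last n → ∀ v w, r u v → r u w → v = w) :
    3 ≤ n ∧
    ∃ σ : Equiv.Perm (Fin (n + 1)), σ (Fin.last n) = Fin.last n ∧
      ∀ u v : Fin (n + 1), G.Adj u v ↔ (Paper.wheel n).Adj (σ u) (σ v) := by
  
  classical
  set h : Fin (n+1) := Fin.last n with hh
  have radj : ∀ {u v}, r u v → G.Adj u v := fun {u v} hr => (hor u v).2 (Or.inl hr)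
  have rirr : ∀ v, ¬ r v v := fun v hr => G.loopless.irrefl v (radj hr)
  set out : Fin (n+1) → ℕ := fun v => (Finset.univ.filter (fun w => r v w)).card with hout_def
  set inn : Fin (n+1) → ℕ := fun v => (Finset.univ.filter (fun w => r w v)).card with hinn_def
  have hdeg_split : ∀ v, G.degree v = out v + inn v := by
    intro v
    rw [SimpleGraph.degree, SimpleGraph.neighborFinset_eq_filter]
    have he : Finset.univ.filter (G.Adj v) =
        (Finset.univ.filter fun w => r v w) ∪ (Finset.univ.filter fun w => r w v) := by
      ext w; simp [hor v w]
    rw [he, Finset.card_union_of_disjoint]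
    rw [Finset.disjoint_left]
    intro a ha hb
    simp only [Finset.mem_filter, Finset.mem_univ, true_and] at ha hb
    exact hna v a ⟨ha, hb⟩
  have hsum_eq : ∑ v, out v = ∑ v, inn v := by
    simp only [hout_def, hinn_def, Finset.card_filter]
    exact Finset.sum_comm
  have hout1 : ∀ v, v ≠ h → out v ≤ 1 := by
    intro v hv
    apply Finset.card_le_one.2
    intro a ha b hb
    simp only [Finset.mem_filter, Finset.mem_univ, true_and] at ha hb
    exact hout v hv a b ha hb
  have hdegn : ∀ v, G.degree v ≤ n := by
    intro v
    have := G.degree_lt_card_verts v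
    simpa [Fintype.card_fin, Nat.lt_succ_iff] using this
  have hcard_erase : (Finset.univ.erase h).card = n := by
    rw [Finset.card_erase_of_mem (Finset.mem_univ h), Finset.card_univ, Fintype.card_fin]
    omega
  have hsplit_out : ∑ v ∈ Finset.univ.erase h, out v + out h = ∑ v, out v :=
    Finset.sum_erase_add _ _ (Finset.mem_univ h)
  have hsplit_inn : ∑ v ∈ Finset.univ.erase h, inn v + inn h = ∑ v, inn v :=
    Finset.sum_erase_add _ _ (Finset.mem_univ h)
  have hA : ∑ v ∈ Finset.univ.erase h, out v ≤ n := by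
    calc ∑ v ∈ Finset.univ.erase h, out v ≤ ∑ _v ∈ Finset.univ.erase h, 1 :=
          Finset.sum_le_sum (fun v hv => hout1 v (Finset.ne_of_mem_erase hv))
      _ = n := by rw [Finset.sum_const, hcard_erase, smul_eq_mul, mul_one]
  have hinn2 : ∀ v, v ≠ h → 2 ≤ inn v := by
    intro v hv
    have h1 := hdeg v
    have h2 := hout1 v hv
    rw [hdeg_split v] at h1
    omega
  have hB : 2 * n ≤ ∑ v ∈ Finset.univ.erase h, inn v := by
    calc 2 * n = ∑ _v ∈ Finset.univ.erase h, 2 := by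
          rw [Finset.sum_const, hcard_erase, smul_eq_mul, mul_comm]
      _ ≤ _ := Finset.sum_le_sum (fun v hv => hinn2 v (Finset.ne_of_mem_erase hv))
  have hdh : out h + inn h ≤ n := by rw [← hdeg_split h]; exact hdegn h
  have houth : out h = n ∧ inn h = 0 := by omega
  have hAB : ∑ v ∈ Finset.univ.erase h, out v = n ∧
      ∑ v ∈ Finset.univ.erase h, inn v = 2 * n := by omega
  have hout_eq1 : ∀ v, v ≠ h → out v = 1 := by
    intro v hv
    have := (Finset.sum_eq_sum_iff_of_le
      (fun i hi => hout1 i (Finset.ne_of_mem_erase hi))).1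
      (by rw [hAB.1, Finset.sum_const, hcard_erase, smul_eq_mul, mul_one])
    exact this v (Finset.mem_erase.2 ⟨hv, Finset.mem_univ v⟩)
  have hinn_eq2 : ∀ v, v ≠ h → inn v = 2 := by
    intro v hv
    have := (Finset.sum_eq_sum_iff_of_le
      (fun i hi => hinn2 i (Finset.ne_of_mem_erase hi))).1
      (by rw [hAB.2, Finset.sum_const, hcard_erase, smul_eq_mul, mul_comm])
    exact (this v (Finset.mem_erase.2 ⟨hv, Finset.mem_univ v⟩)).symm
  clear hsum_eq hA hB hdh hsplit_out hsplit_inn hAB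
  -- n ≥ 3
  have hn3 : 3 ≤ n := le_trans (hdeg h) (hdegn h)
  -- h has edges to everyone
  have hrh : ∀ w, w ≠ h → r h w := by
    intro w hw
    have hcard : (Finset.univ.filter (fun w => r h w)).card = n := houth.1
    have hsub : (Finset.univ.filter (fun w => r h w)) ⊆ Finset.univ.erase h := by
      intro a ha
      simp only [Finset.mem_filter, Finset.mem_univ, true_and] at ha
      exact Finset.mem_erase.2 ⟨fun he => rirr h (he ▸ ha), Finset.mem_univ a⟩
    have : Finset.univ.filter (fun w => r h w) = Finset.univ.erase h :=
      Finset.eq_of_subset_of_card_le hsub (by rw [hcard_erase, hcard])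
    have hm : w ∈ Finset.univ.filter (fun w => r h w) := by
      rw [this]; exact Finset.mem_erase.2 ⟨hw, Finset.mem_univ w⟩
    simpa using hm
  have hnoinh : ∀ w, ¬ r w h := by
    intro w hw
    have : w ∈ Finset.univ.filter (fun w => r w h) := by simpa using hw
    rw [Finset.card_eq_zero.1 houth.2] at this
    exact absurd this (Finset.notMem_empty w)
  -- the unique in-neighbour other than h
  have hin_unique : ∀ v, v ≠ h → ∀ w₁ w₂, w₁ ≠ h → w₂ ≠ h → r w₁ v → r w₂ v → w₁ = w₂ := by
    intro v hv w₁ w₂ h1 h2 hr1 hr2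
    have hmem : h ∈ Finset.univ.filter (fun w => r w v) := by simpa using hrh v hv
    have h2' : (Finset.univ.filter (fun w => r w v)).card = 2 := hinn_eq2 v hv
    have hc : ((Finset.univ.filter (fun w => r w v)).erase h).card = 1 := by
      rw [Finset.card_erase_of_mem hmem, h2']
    have := Finset.card_le_one.1 (le_of_eq hc)
    exact this w₁ (Finset.mem_erase.2 ⟨h1, by simpa using hr1⟩)
      w₂ (Finset.mem_erase.2 ⟨h2, by simpa using hr2⟩)
  -- existence of out-neighbour
  have hex : ∀ v, v ≠ h → ∃ w, r v w := by
    intro v hv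
    have h1 : (Finset.univ.filter (fun w => r v w)).card = 1 := hout_eq1 v hv
    obtain ⟨a, ha⟩ := Finset.card_eq_one.1 h1
    have : a ∈ Finset.univ.filter (fun w => r v w) := ha.symm ▸ Finset.mem_singleton_self a
    exact ⟨a, by simpa using this⟩
  set f : Fin (n+1) → Fin (n+1) :=
    fun v => if hv : v = h then h else Classical.choose (hex v hv) with hf_def
  have hf : ∀ v, v ≠ h → r v (f v) := by
    intro v hv
    simp only [hf_def, dif_neg hv]
    exact Classical.choose_spec (hex v hv)
  have hfeq : ∀ v, v ≠ h → ∀ w, r v w → f v = w := by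
    intro v hv w hw
    exact hout v hv (f v) w (hf v hv) hw
  have hfh : f h = h := by simp [hf_def]
  have hfne_h : ∀ v, v ≠ h → f v ≠ h := fun v hv he => hnoinh v (he ▸ hf v hv)
  have hfne : ∀ v, v ≠ h → f v ≠ v := fun v hv he => rirr v (by
    have := hf v hv; rwa [he] at this)
  have hfinj : Function.Injective f := by
    intro u v huv
    by_cases hu : u = h <;> by_cases hv : v = h
    · rw [hu, hv]
    · rw [hu, hfh] at huv; exact absurd huv.symm (hfne_h v hv)
    · rw [hv, hfh] at huv; exact absurd huv (hfne_h u hu)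
    · exact hin_unique (f u) (hfne_h u hu) u v hu hv (hf u hu) (huv ▸ hf v hv)
  set π : Equiv.Perm (Fin (n+1)) :=
    Equiv.ofBijective f (Finite.injective_iff_bijective.1 hfinj) with hpi_def
  have hπ : ∀ v, π v = f v := fun v => rfl
  have hπh : ∀ k : ℕ, (π ^ k) h = h := by
    intro k
    induction k with
    | zero => rfl
    | succ k ih => rw [pow_succ, Equiv.Perm.mul_apply, hπ, hfh, ih]
  have hπrim : ∀ (k : ℕ) (v : Fin (n+1)), v ≠ h → (π ^ k) v ≠ h := by
    intro k
    induction k with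
    | zero => intro v hv; simpa using hv
    | succ k ih =>
      intro v hv
      rw [pow_succ, Equiv.Perm.mul_apply, hπ]
      exact ih (f v) (hfne_h v hv)
  -- rim adjacency characterization
  have hadjrim : ∀ u v, u ≠ h → v ≠ h → (G.Adj u v ↔ f u = v ∨ f v = u) := by
    intro u v hu hv
    constructor
    · intro ha
      rcases (hor u v).1 ha with hr | hr
      · exact Or.inl (hfeq u hu v hr)
      · exact Or.inr (hfeq v hv u hr)
    · rintro (he | he)
      · exact radj (he ▸ hf u hu)
      · exact (radj (he ▸ hf v hv)).symm
  -- walks in the rim stay in the orbit of π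
  have walkclaim : ∀ (a b : ({h}ᶜ : Set (Fin (n+1)))),
      (SimpleGraph.induce ({h}ᶜ : Set (Fin (n+1))) G).Walk a b →
      ∃ p q : ℕ, (π ^ p) a.1 = (π ^ q) b.1 := by
    intro a b w
    induction w with
    | nil => exact ⟨0, 0, rfl⟩
    | @cons a c b hadj _ ih =>
      obtain ⟨p, q, hpq⟩ := ih
      have hane : a.1 ≠ h := fun he => a.2 (Set.mem_singleton_iff.2 he)
      have hcne : c.1 ≠ h := fun he => c.2 (Set.mem_singleton_iff.2 he)
      have hadj' : G.Adj a.1 c.1 := hadj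
      rcases (hadjrim a.1 c.1 hane hcne).1 hadj' with he | he
      · refine ⟨p+1, q, ?_⟩
        rw [pow_succ, Equiv.Perm.mul_apply, hπ, he, hpq]
      · refine ⟨p, q+1, ?_⟩
        calc (π^p) a.1 = (π^(p+1)) c.1 := by
              rw [← he, ← hπ, pow_succ, Equiv.Perm.mul_apply]
          _ = π ((π^p) c.1) := by rw [pow_succ', Equiv.Perm.mul_apply]
          _ = π ((π^q) b.1) := by rw [hpq]
          _ = (π^(q+1)) b.1 := by rw [pow_succ', Equiv.Perm.mul_apply]
  set v0 : Fin (n+1) := ⟨0, Nat.succ_pos n⟩ with hv0_def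
  have hv0 : v0 ≠ h := by
    simp only [hv0_def, hh, ne_eq, Fin.ext_iff, Fin.val_last]
    omega
  have hreach0 : ∀ v : Fin (n+1), v ≠ h → ∃ p q : ℕ, (π^p) v0 = (π^q) v := by
    intro v hv
    have hconn' := (hirr h).preconnected ⟨v0, by simpa using hv0⟩ ⟨v, by simpa using hv⟩
    obtain ⟨w⟩ := hconn'
    exact walkclaim _ _ w
  set N := orderOf π with hN_def
  have hNpos : 0 < N := orderOf_pos π
  have hπN : π ^ N = 1 := pow_orderOf_eq_one π
  have hreach : ∀ v, v ≠ h → ∃ j : ℕ, (π ^ j) v0 = v := by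
    intro v hv
    obtain ⟨p, q, hpq⟩ := hreach0 v hv
    refine ⟨q*(N-1)+p, ?_⟩
    have h1 : (π ^ (q*(N-1)+p)) v0 = (π ^ (q*(N-1))) ((π ^ p) v0) := by
      rw [pow_add, Equiv.Perm.mul_apply]
    have h2 : q*(N-1)+q = N*q := by
      have h3 : N - 1 + 1 = N := Nat.succ_pred_eq_of_pos hNpos
      calc q*(N-1)+q = q*(N-1+1) := by ring
        _ = N*q := by rw [h3, mul_comm]
    rw [h1, hpq, ← Equiv.Perm.mul_apply, ← pow_add, h2, pow_mul, hπN, one_pow,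
      Equiv.Perm.coe_one, id_eq]
  -- minimal period is n
  set m := Function.minimalPeriod (⇑π) v0 with hm_def
  have hiter : ∀ j : ℕ, (⇑π)^[j] v0 = (π ^ j) v0 := fun j => by
    rw [Equiv.Perm.coe_pow]
  have hperN : Function.IsPeriodicPt (⇑π) N v0 := by
    show (⇑π)^[N] v0 = v0
    rw [hiter, hπN, Equiv.Perm.coe_one, id_eq]
  have hmpos : 0 < m := hperN.minimalPeriod_pos hNpos
  have hinj_lt : ∀ i j : ℕ, i < m → j < m → (π ^ i) v0 = (π ^ j) v0 → i = j := by
    intro i j hi hj hij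
    refine Function.iterate_injOn_Iio_minimalPeriod (f := ⇑π) (x := v0) ?_ ?_ ?_
    · exact Set.mem_Iio.2 (hm_def ▸ hi)
    · exact Set.mem_Iio.2 (hm_def ▸ hj)
    · show (⇑π)^[i] v0 = (⇑π)^[j] v0
      rw [hiter, hiter]; exact hij
  have hsub : (Finset.range m).image (fun j => (π ^ j) v0) ⊆ Finset.univ.erase h := by
    intro a ha
    simp only [Finset.mem_image, Finset.mem_range] at ha
    obtain ⟨j, hj, rfl⟩ := ha
    exact Finset.mem_erase.2 ⟨hπrim j v0 hv0, Finset.mem_univ _⟩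
  have hsup : Finset.univ.erase h ⊆ (Finset.range m).image (fun j => (π ^ j) v0) := by
    intro v hv'
    obtain ⟨j, hj⟩ := hreach v (Finset.ne_of_mem_erase hv')
    refine Finset.mem_image.2 ⟨j % m, Finset.mem_range.2 (Nat.mod_lt _ hmpos), ?_⟩
    have e0 := Function.iterate_mod_minimalPeriod_eq (f := ⇑π) (x := v0) (n := j)
    rw [hiter, hiter] at e0
    have e1 : (π ^ (j % m)) v0 = (π ^ j) v0 := by rw [hm_def]; exact e0
    rw [e1, hj]
  have hcard_image : ((Finset.range m).image (fun j => (π ^ j) v0)).card = m := by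
    rw [Finset.card_image_of_injOn, Finset.card_range]
    intro i hi j hj hij
    exact hinj_lt i j (Finset.mem_range.1 (by exact hi)) (Finset.mem_range.1 (by exact hj)) hij
  have hmn : m = n := by
    have h1 := Finset.card_le_card hsub
    have h2 := Finset.card_le_card hsup
    rw [hcard_image, hcard_erase] at h1 h2
    omega
  have hpern : (π ^ n) v0 = v0 := by
    have e0 := Function.iterate_minimalPeriod (f := ⇑π) (x := v0)
    rw [hiter] at e0
    rw [← hm_def] at e0
    rwa [hmn] at e0
  have hinjn : ∀ i j : ℕ, i < n → j < n → (π ^ i) v0 = (π ^ j) v0 → i = j := by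
    intro i j hi hj
    exact hinj_lt i j (by omega) (by omega)
  -- the labelling map
  have hnpos : 0 < n := by omega
  have hmodpow : ∀ a : ℕ, (π ^ (a % n)) v0 = (π ^ a) v0 := by
    intro a
    have e0 := Function.iterate_mod_minimalPeriod_eq (f := ⇑π) (x := v0) (n := a)
    rw [hiter, hiter] at e0
    rw [← hm_def, hmn] at e0
    exact e0
  have hmodfact : ∀ a : ℕ, a < n → (a+1) % n = if a+1 = n then 0 else a+1 := by
    intro a ha
    split
    · next he => rw [he, Nat.mod_self]
    · next he => exact Nat.mod_eq_of_lt (by omega)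
  set τ : Fin (n+1) → Fin (n+1) :=
    fun i => if (i:ℕ) = n then h else (π ^ (i:ℕ)) v0 with hτ_def
  have hτ_last : τ h = h := by simp [hτ_def, hh]
  have hτ_rim : ∀ i : Fin (n+1), (i:ℕ) < n → τ i = (π ^ (i:ℕ)) v0 := by
    intro i hi; simp [hτ_def, Nat.ne_of_lt hi]
  have hτ_rim_ne : ∀ i : Fin (n+1), (i:ℕ) < n → τ i ≠ h := by
    intro i hi; rw [hτ_rim i hi]; exact hπrim _ _ hv0
  have hτ_hub : ∀ i : Fin (n+1), (i:ℕ) = n → τ i = h := by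
    intro i hi; simp [hτ_def, hi]
  have hτinj : Function.Injective τ := by
    intro i j hij
    have hi' : (i:ℕ) < n + 1 := i.isLt
    have hj' : (j:ℕ) < n + 1 := j.isLt
    by_cases hi : (i:ℕ) = n <;> by_cases hj : (j:ℕ) = n
    · exact Fin.ext (by omega)
    · exfalso
      have h1 := hτ_hub i hi
      rw [hij] at h1
      exact hτ_rim_ne j (by omega) h1
    · exfalso
      have h1 := hτ_hub j hj
      rw [← hij] at h1
      exact hτ_rim_ne i (by omega) h1
    · rw [hτ_rim i (by omega), hτ_rim j (by omega)] at hij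
      exact Fin.ext (hinjn _ _ (by omega) (by omega) hij)
  set σ' : Equiv.Perm (Fin (n+1)) := Equiv.ofBijective τ
    (Finite.injective_iff_bijective.1 hτinj) with hσ'_def
  have hσ'app : ∀ i, σ' i = τ i := fun i => rfl
  -- the key adjacency transfer
  have hkey : ∀ i j : Fin (n+1), G.Adj (τ i) (τ j) ↔ (Paper.wheel n).Adj i j := by
    intro i j
    have hi' : (i:ℕ) < n + 1 := i.isLt
    have hj' : (j:ℕ) < n + 1 := j.isLt
    have hlast : ∀ a : Fin (n+1), a = Fin.last n ↔ (a:ℕ) = n := by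
      intro a; rw [Fin.ext_iff, Fin.val_last]
    by_cases hi : (i:ℕ) = n <;> by_cases hj : (j:ℕ) = n
    · -- both hub
      have he : i = j := Fin.ext (by omega)
      constructor
      · intro ha; rw [he] at ha; exact absurd ha (G.irrefl)
      · intro ha; exact absurd he ha.1
    · -- i hub, j rim
      have hih := hτ_hub i hi
      have hjne := hτ_rim_ne j (by omega)
      constructor
      · intro _
        exact ⟨fun he => hj (he ▸ hi), Or.inl ((hlast i).2 hi)⟩
      · intro _
        rw [hih]
        exact radj (hrh (τ j) hjne)
    · -- j hub, i rim
      have hjh := hτ_hub j hj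
      have hine := hτ_rim_ne i (by omega)
      constructor
      · intro _
        exact ⟨fun he => hi (he ▸ hj.symm ▸ rfl), Or.inr (Or.inl ((hlast j).2 hj))⟩
      · intro _
        rw [hjh]
        exact (radj (hrh (τ i) hine)).symm
    · -- both rim
      have hi2 : (i:ℕ) < n := by omega
      have hj2 : (j:ℕ) < n := by omega
      have hti := hτ_rim i hi2
      have htj := hτ_rim j hj2
      have hine := hτ_rim_ne i hi2
      have hjne := hτ_rim_ne j hj2
      rw [hadjrim (τ i) (τ j) hine hjne]
      have hfi : f (τ i) = (π ^ (((i:ℕ)+1) % n)) v0 := by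
        rw [hti, ← hπ, ← Equiv.Perm.mul_apply, ← pow_succ', hmodpow]
      have hfj : f (τ j) = (π ^ (((j:ℕ)+1) % n)) v0 := by
        rw [htj, ← hπ, ← Equiv.Perm.mul_apply, ← pow_succ', hmodpow]
      have hiff1 : (f (τ i) = τ j) ↔ ((i:ℕ)+1) % n = (j:ℕ) := by
        rw [hfi, htj]
        constructor
        · intro he; exact hinjn _ _ (Nat.mod_lt _ hnpos) hj2 he
        · intro he; rw [he]
      have hiff2 : (f (τ j) = τ i) ↔ ((j:ℕ)+1) % n = (i:ℕ) := by
        rw [hfj, hti]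
        constructor
        · intro he; exact hinjn _ _ (Nat.mod_lt _ hnpos) hi2 he
        · intro he; rw [he]
      constructor
      · rintro (he | he)
        · have hmj := hiff1.1 he
          refine ⟨?_, Or.inr (Or.inr (Or.inl hmj))⟩
          intro hij
          have hv : (i:ℕ) = (j:ℕ) := by rw [hij]
          have hm := hmodfact (i:ℕ) hi2
          rw [hm] at hmj
          split at hmj <;> omega
        · have hmj := hiff2.1 he
          refine ⟨?_, Or.inr (Or.inr (Or.inr hmj))⟩
          intro hij
          have hv : (i:ℕ) = (j:ℕ) := by rw [hij]
          have hm := hmodfact (j:ℕ) hj2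
          rw [hm] at hmj
          split at hmj <;> omega
      · rintro ⟨hne, (he | he | he | he)⟩
        · exact absurd ((hlast i).1 he) hi
        · exact absurd ((hlast j).1 he) hj
        · exact Or.inl (hiff1.2 he)
        · exact Or.inr (hiff2.2 he)
  refine ⟨hn3, σ'.symm, ?_, ?_⟩
  · have hfix : σ' h = h := hτ_last
    exact (Equiv.symm_apply_eq σ').2 hfix.symm
  · intro u v
    have hu : τ (σ'.symm u) = u := σ'.apply_symm_apply u
    have hv' : τ (σ'.symm v) = v := σ'.apply_symm_apply v
    rw [← hkey (σ'.symm u) (σ'.symm v), hu, hv']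
end

section
/- Let G be a simple graph on a finite vertex set V, let h ∈ V, and assume that every vertex other than h has degree at least 3. Let r be an orientation of G such that every vertex other than h has at most one outgoing edge. Then h has no incoming edge: there is no vertex u with r u h. -/
/-- If every vertex other than `h` has degree at least 3 and `r`
is an orientation in which every vertex other than `h` has at most one outgoing
edge, then `h` has no incoming edge. -/
theorem statement15 (V : Type*) [Fintype V] (G : SimpleGraph V) [DecidableRel G.Adj]
    (h : V) (hdeg : ∀ v : V, v ≠ h → 3 ≤ G.degree v)
    (r : V → V → Prop)
    (hor : ∀ u v : V, G.Adj u v ↔ (r u v ∨ r v u))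
    (hna : ∀ u v : V, ¬ (r u v ∧ r v u))
    (hout : ∀ u : V, u ≠ h → ∀ v w : V, r u v → r u w → v = w) :
    ¬ ∃ u : V, r u h := by
  classical
  rintro ⟨u, hu⟩
  set out : V → ℕ := fun v => (Finset.univ.filter (fun w => r v w)).card with hout_def
  set inn : V → ℕ := fun v => (Finset.univ.filter (fun w => r w v)).card with hinn_def
  have hsum : ∑ v, out v = ∑ v, inn v := by
    simp only [hout_def, hinn_def, Finset.card_filter]
    exact Finset.sum_comm
  have hdegsplit : ∀ v, G.degree v = out v + inn v := by
    intro v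
    have hset : G.neighborFinset v =
        Finset.univ.filter (fun w => r v w) ∪ Finset.univ.filter (fun w => r w v) := by
      ext w
      simp [SimpleGraph.mem_neighborFinset, hor v w]
    have hdisj : Disjoint (Finset.univ.filter (fun w => r v w))
        (Finset.univ.filter (fun w => r w v)) := by
      rw [Finset.disjoint_filter]
      exact fun w _ hvw hwv => hna v w ⟨hvw, hwv⟩
    rw [← SimpleGraph.card_neighborFinset_eq_degree, hset,
      Finset.card_union_of_disjoint hdisj]
  -- out-degree bound for non-h vertices
  have hout1 : ∀ v ∈ Finset.univ.erase h, out v ≤ 1 := by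
    intro v hv
    have hvne : v ≠ h := (Finset.mem_erase.1 hv).1
    apply Finset.card_le_one.2
    intro a ha b hb
    exact hout v hvne a b (Finset.mem_filter.1 ha).2 (Finset.mem_filter.1 hb).2
  -- in-degree bound for non-h vertices
  have hin2 : ∀ v ∈ Finset.univ.erase h, 2 ≤ inn v := by
    intro v hv
    have hvne : v ≠ h := (Finset.mem_erase.1 hv).1
    have := hdeg v hvne
    have hd := hdegsplit v
    have := hout1 v hv
    omega
  set m := (Finset.univ.erase h).card with hm
  -- h's degree is at most m
  have hdegh : G.degree h ≤ m := by
    rw [← SimpleGraph.card_neighborFinset_eq_degree]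
    apply Finset.card_le_card
    intro w hw
    have hadj := (SimpleGraph.mem_neighborFinset G h w).1 hw
    exact Finset.mem_erase.2 ⟨fun hcon => G.irrefl (hcon ▸ hadj), Finset.mem_univ w⟩
  -- h has an incoming edge
  have hinh : 1 ≤ inn h := by
    apply Finset.card_pos.2
    exact ⟨u, Finset.mem_filter.2 ⟨Finset.mem_univ u, hu⟩⟩
  -- split sums
  have hsplit_out : ∑ v, out v = out h + ∑ v ∈ Finset.univ.erase h, out v := by
    rw [← Finset.add_sum_erase _ out (Finset.mem_univ h)]
  have hsplit_in : ∑ v, inn v = inn h + ∑ v ∈ Finset.univ.erase h, inn v := by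
    rw [← Finset.add_sum_erase _ inn (Finset.mem_univ h)]
  have hub : ∑ v ∈ Finset.univ.erase h, out v ≤ m := by
    calc ∑ v ∈ Finset.univ.erase h, out v ≤ m * 1 := Finset.sum_le_card_nsmul _ _ 1 hout1
    _ = m := by ring
  have hlb : 2 * m ≤ ∑ v ∈ Finset.univ.erase h, inn v := by
    calc (2 * m : ℕ) = m * 2 := by ring
    _ ≤ _ := Finset.card_nsmul_le_sum _ _ 2 hin2
  have hdh := hdegsplit h
  omega
end

section
/- Let G be a simple graph on a finite vertex set V, let h ∈ V, and assume that every vertex other than h has degree at least 3. Let r be an orientation of G such that every vertex other than h has at most one outgoing edge. Then every vertex w ≠ h has at most one incoming edge originating at a vertex other than h: there is at most one vertex u with u ≠ h and r u w. -/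
/-- If every vertex other than `h` has degree at least 3 and `r`
is an orientation in which every vertex other than `h` has at most one outgoing
edge, then every vertex `w ≠ h` has at most one incoming edge originating at a
vertex other than `h`. -/
theorem statement16 (V : Type*) [Fintype V] (G : SimpleGraph V) [DecidableRel G.Adj]
    (h : V) (hdeg : ∀ v : V, v ≠ h → 3 ≤ G.degree v)
    (r : V → V → Prop)
    (hor : ∀ u v : V, G.Adj u v ↔ (r u v ∨ r v u))
    (hna : ∀ u v : V, ¬ (r u v ∧ r v u))
    (hout : ∀ u : V, u ≠ h → ∀ v w : V, r u v → r u w → v = w) :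
    ∀ w : V, w ≠ h → ∀ u u' : V, u ≠ h → u' ≠ h → r u w → r u' w → u = u' := by
  classical
  intro w hw u u' hu hu' hrw hrw'
  by_contra hne
  set A : Finset V := Finset.univ.filter (· ≠ h) with hA
  have hmem : ∀ v : V, v ∈ A ↔ v ≠ h := by simp [hA]
  set outA : V → ℕ := fun a => (A.filter (fun b => r a b)).card with houtA
  set inA : V → ℕ := fun a => (A.filter (fun b => r b a)).card with hinA
  set nA : V → ℕ := fun a => (A.filter (fun b => G.Adj a b)).card with hnA
  set n : ℕ := A.card with hn
  -- splitting neighbors into out/in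
  have hsplit : ∀ a : V, nA a = outA a + inA a := by
    intro a
    have he : A.filter (fun b => G.Adj a b)
        = A.filter (fun b => r a b) ∪ A.filter (fun b => r b a) := by
      rw [← Finset.filter_or]
      apply Finset.filter_congr
      intro b _
      simp [hor a b]
    have hd : Disjoint (A.filter (fun b => r a b)) (A.filter (fun b => r b a)) := by
      rw [Finset.disjoint_left]
      intro b hb hb'
      simp only [Finset.mem_filter] at hb hb'
      exact hna a b ⟨hb.2, hb'.2⟩
    simp only [hnA, houtA, hinA]
    rw [he, Finset.card_union_of_disjoint hd]
  -- out-degree at most one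
  have hout1 : ∀ a ∈ A, outA a ≤ 1 := by
    intro a ha
    apply Finset.card_le_one.2
    intro b hb c hc
    simp only [Finset.mem_filter] at hb hc
    exact hout a ((hmem a).1 ha) b c hb.2 hc.2
  -- degree bound
  have hdegle : ∀ a ∈ A, G.degree a ≤ nA a + 1 := by
    intro a ha
    have hsub : G.neighborFinset a ⊆ insert h (A.filter (fun b => G.Adj a b)) := by
      intro b hb
      rw [SimpleGraph.mem_neighborFinset] at hb
      by_cases hbh : b = h
      · simp [hbh]
      · exact Finset.mem_insert_of_mem (Finset.mem_filter.2 ⟨(hmem b).2 hbh, hb⟩)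
    calc G.degree a = (G.neighborFinset a).card := (G.card_neighborFinset_eq_degree a).symm
      _ ≤ (insert h (A.filter (fun b => G.Adj a b))).card := Finset.card_le_card hsub
      _ ≤ nA a + 1 := by
          simpa [hnA] using Finset.card_insert_le h (A.filter (fun b => G.Adj a b))
  -- double counting
  have hdouble : ∑ a ∈ A, inA a = ∑ a ∈ A, outA a := by
    simp only [hinA, houtA, Finset.card_filter]
    exact Finset.sum_comm
  have hsumout : ∑ a ∈ A, outA a ≤ n := by
    calc ∑ a ∈ A, outA a ≤ ∑ _a ∈ A, 1 := Finset.sum_le_sum hout1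
      _ = n := by simp [hn]
  have hsumdeg3 : 3 * n ≤ ∑ a ∈ A, G.degree a := by
    calc 3 * n = ∑ _a ∈ A, 3 := by simp [hn, mul_comm]
      _ ≤ ∑ a ∈ A, G.degree a :=
          Finset.sum_le_sum (fun a ha => hdeg a ((hmem a).1 ha))
  have hsumdegle : ∑ a ∈ A, G.degree a ≤ ∑ a ∈ A, (nA a + 1) :=
    Finset.sum_le_sum hdegle
  have hsumnA : ∑ a ∈ A, (nA a + 1) = ∑ a ∈ A, outA a + ∑ a ∈ A, inA a + n := by
    simp [hsplit, Finset.sum_add_distrib, hn]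
  have htot : ∑ a ∈ A, (nA a + 1) ≤ 3 * n := by
    rw [hsumnA, hdouble]
    omega
  -- everything is tight
  have hdegeq : ∑ a ∈ A, G.degree a = ∑ a ∈ A, (nA a + 1) := le_antisymm hsumdegle (by omega)
  have hdeg3 : ∑ a ∈ A, (3 : ℕ) = ∑ a ∈ A, G.degree a := by
    have : ∑ _a ∈ A, (3 : ℕ) = 3 * n := by simp [hn, mul_comm]
    omega
  have houteq : ∑ a ∈ A, outA a = ∑ _a ∈ A, (1 : ℕ) := by
    have h1 : ∑ _a ∈ A, (1 : ℕ) = n := by simp [hn]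
    omega
  have hwA : w ∈ A := (hmem w).2 hw
  -- pointwise equalities at w
  have hdw : G.degree w = 3 :=
    ((Finset.sum_eq_sum_iff_of_le (fun a ha => hdeg a ((hmem a).1 ha))).1 hdeg3 w hwA).symm
  have hdw2 : G.degree w = nA w + 1 :=
    (Finset.sum_eq_sum_iff_of_le hdegle).1 hdegeq w hwA
  have how : outA w = 1 :=
    (Finset.sum_eq_sum_iff_of_le hout1).1 houteq w hwA
  -- but w has at least two in-neighbors in A
  have hin2 : 2 ≤ inA w := by
    have hsub : ({u, u'} : Finset V) ⊆ A.filter (fun b => r b w) := by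
      intro b hb
      simp only [Finset.mem_insert, Finset.mem_singleton] at hb
      rcases hb with rfl | rfl
      · exact Finset.mem_filter.2 ⟨(hmem b).2 hu, hrw⟩
      · exact Finset.mem_filter.2 ⟨(hmem b).2 hu', hrw'⟩
    have hc : ({u, u'} : Finset V).card = 2 := Finset.card_pair hne
    calc 2 = ({u, u'} : Finset V).card := hc.symm
      _ ≤ _ := Finset.card_le_card hsub
  have := hsplit w
  omega
end
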